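/- arXiv:1406.3309 — 7 statements merged into one kernel-verified Lean document; each statement's English description precedes it below -/
import Mathlib

section
/- Let Λ be an unbounded subset of ω₂ consisting of ordinals of cofinality ω₁, and let M and N be countable subsets of ω₂. Define Λ_M = {β ∈ Λ : β = min(Λ \ sup(M ∩ β))} and similarly Λ_N. Then Λ_M ∩ Λ_N is nonempty and has a largest element. -/
open Ordinal Cardinal Set

/-- `Λ_M`: the set of `β ∈ Λ` with `β = min(Λ \ sup(M ∩ β))`. -/
noncomputable def LambdaAt (Λ M : Set Ordinal) : Set Ordinal :=
  {β ∈ Λ | β = sInf {δ ∈ Λ | sSup (M ∩ Set.Iio β) ≤ δ}}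

/-- The set of nonzero limit points of a set of ordinals. -/
def limPts (M : Set Ordinal) : Set Ordinal :=
  {γ | sSup (M ∩ Set.Iio γ) = γ ∧ 0 < γ}

/-- The least element of `Λ` that is `≥ γ`. -/
noncomputable def nextIn (Λ : Set Ordinal) (γ : Ordinal) : Ordinal :=
  sInf {δ ∈ Λ | γ ≤ δ}

/-- One step of the comparison process. -/
noncomputable def cmpStep (Λ M N : Set Ordinal) (β : Ordinal) : Ordinal :=
  min (nextIn Λ (sSup (M ∩ Set.Iio β))) (nextIn Λ (sSup (N ∩ Set.Iio β)))

lemma sSup_inter_Iio_le (X : Set Ordinal) (β : Ordinal) : sSup (X ∩ Set.Iio β) ≤ β :=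
  csSup_le' fun _ hx => le_of_lt hx.2

lemma nextIn_le (Λ : Set Ordinal) {γ δ : Ordinal} (hδ : δ ∈ Λ) (h : γ ≤ δ) :
    nextIn Λ γ ≤ δ :=
  csInf_le (OrderBot.bddBelow _) ⟨hδ, h⟩

/-- The comparison point exists: `Λ_M ∩ Λ_N` has a largest element. -/
theorem comparison_point_exists (Λ : Set Ordinal)
    (hΛsub : Λ ⊆ Set.Iio (Cardinal.aleph 2).ord)
    (hΛunbd : ∀ γ < (Cardinal.aleph 2).ord, ∃ β ∈ Λ, γ ≤ β)
    (hΛcof : ∀ β ∈ Λ, Ordinal.cof β = Cardinal.aleph 1)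
    (M N : Set Ordinal) (hM : M.Countable) (hMsub : M ⊆ Set.Iio (Cardinal.aleph 2).ord)
    (hN : N.Countable) (hNsub : N ⊆ Set.Iio (Cardinal.aleph 2).ord) :
    (LambdaAt Λ M ∩ LambdaAt Λ N).Nonempty ∧
      ∃ β, IsGreatest (LambdaAt Λ M ∩ LambdaAt Λ N) β := by
  set Ω := (Cardinal.aleph 2).ord with hΩdef
  have hreg : (Cardinal.aleph 2).IsRegular := by
    have h2 : (2 : Ordinal) = Order.succ 1 := by
      rw [← Ordinal.add_one_eq_succ, one_add_one_eq_two]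
    rw [h2]
    exact Cardinal.isRegular_aleph_succ 1
  have hcofΩ : Ω.cof = Cardinal.aleph 2 := hreg.cof_eq
  have hΩ0 : (0 : Ordinal) < Ω := hreg.ord_pos
  -- countable subsets of `Iio Ω` have supremum `< Ω`
  have hsupSmall : ∀ X : Set Ordinal, X.Countable → X ⊆ Set.Iio Ω → sSup X < Ω := by
    intro X hXc hXs
    rcases X.eq_empty_or_nonempty with rfl | hXne
    · rw [csSup_empty]
      exact hΩ0
    · obtain ⟨f, hf⟩ := Set.Countable.exists_eq_range hXc hXne
      have h2 : ∀ n, f n < Ω := fun n => hXs (by rw [hf]; exact Set.mem_range_self n)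
      have hcard : Cardinal.lift.{u_1, 0} #ℕ < Ω.cof := by
        rw [Cardinal.mk_nat, Cardinal.lift_aleph0, hcofΩ]
        have h0 : (ℵ₀ : Cardinal) = Cardinal.aleph 0 := Cardinal.aleph_zero.symm
        rw [h0]
        exact Cardinal.aleph_lt_aleph.2 (by norm_num)
      have h3 : (⨆ n, f n) < Ω := Ordinal.iSup_lt_ord_lift hcard h2
      rw [hf]
      exact h3
  have hnext : ∀ γ < Ω, nextIn Λ γ ∈ Λ ∧ γ ≤ nextIn Λ γ := by
    intro γ hγ
    obtain ⟨δ, hδ, hγδ⟩ := hΛunbd γ hγ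
    have : sInf {d ∈ Λ | γ ≤ d} ∈ {d ∈ Λ | γ ≤ d} := csInf_mem ⟨δ, hδ, hγδ⟩
    exact this
  -- the step map stays in Λ and is descending
  have hstep : ∀ β ∈ Λ, cmpStep Λ M N β ∈ Λ ∧ cmpStep Λ M N β ≤ β := by
    intro β hβ
    have hβΩ : β < Ω := hΛsub hβ
    have hMβ : sSup (M ∩ Set.Iio β) < Ω := lt_of_le_of_lt (sSup_inter_Iio_le M β) hβΩ
    have hNβ : sSup (N ∩ Set.Iio β) < Ω := lt_of_le_of_lt (sSup_inter_Iio_le N β) hβΩ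
    have haΛ := (hnext _ hMβ).1
    have hbΛ := (hnext _ hNβ).1
    have ha_le : nextIn Λ (sSup (M ∩ Set.Iio β)) ≤ β := nextIn_le Λ hβ (sSup_inter_Iio_le M β)
    constructor
    · rcases min_choice (nextIn Λ (sSup (M ∩ Set.Iio β))) (nextIn Λ (sSup (N ∩ Set.Iio β)))
        with h | h
      · rw [cmpStep, h]; exact haΛ
      · rw [cmpStep, h]; exact hbΛ
    · exact le_trans (min_le_left _ _) ha_le
  -- iterate the step map; it stabilizes at a common point
  obtain ⟨β₀, hβ₀Λ, -⟩ := hΛunbd 0 hΩ0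
  have hiter : ∀ n, (cmpStep Λ M N)^[n] β₀ ∈ Λ := by
    intro n
    induction n with
    | zero => exact hβ₀Λ
    | succ n ih => rw [Function.iterate_succ_apply']; exact (hstep _ ih).1
  set R := Set.range fun n : ℕ => (cmpStep Λ M N)^[n] β₀ with hRdef
  have hRne : R.Nonempty := ⟨β₀, 0, rfl⟩
  obtain ⟨n, hn⟩ : sInf R ∈ R := csInf_mem hRne
  set β := sInf R with hβdef
  have hβΛ : β ∈ Λ := hn ▸ hiter n
  have hn' : (cmpStep Λ M N)^[n] β₀ = β := hn
  have hfix : cmpStep Λ M N β = β := by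
    have h1 : cmpStep Λ M N β ∈ R :=
      ⟨n + 1, by show (cmpStep Λ M N)^[n + 1] β₀ = _
                 rw [Function.iterate_succ_apply', hn']⟩
    exact le_antisymm (hstep β hβΛ).2 (csInf_le (OrderBot.bddBelow _) h1)
  have ha_le : nextIn Λ (sSup (M ∩ Set.Iio β)) ≤ β := nextIn_le Λ hβΛ (sSup_inter_Iio_le M β)
  have hb_le : nextIn Λ (sSup (N ∩ Set.Iio β)) ≤ β := nextIn_le Λ hβΛ (sSup_inter_Iio_le N β)
  have ha : nextIn Λ (sSup (M ∩ Set.Iio β)) = β :=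
    le_antisymm ha_le (le_trans hfix.ge (min_le_left _ _))
  have hb : nextIn Λ (sSup (N ∩ Set.Iio β)) = β :=
    le_antisymm hb_le (le_trans hfix.ge (min_le_right _ _))
  have hβS : β ∈ LambdaAt Λ M ∩ LambdaAt Λ N := ⟨⟨hβΛ, ha.symm⟩, ⟨hβΛ, hb.symm⟩⟩
  set S := LambdaAt Λ M ∩ LambdaAt Λ N with hSdef
  have hSne : S.Nonempty := ⟨β, hβS⟩
  -- S is bounded above by `nextIn Λ (sSup M)`
  have hsupM : sSup M < Ω := hsupSmall M hM hMsub
  have hbound : ∀ b ∈ S, b ≤ nextIn Λ (sSup M) := by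
    intro b hb
    obtain ⟨hbΛ, hbeq⟩ := hb.1
    obtain ⟨htΛ, hts⟩ := hnext _ hsupM
    rw [hbeq]
    refine csInf_le (OrderBot.bddBelow _) ⟨htΛ, le_trans ?_ hts⟩
    exact csSup_le_csSup' (bddAbove_Iio.mono hMsub) inter_subset_left
  have hSbdd : BddAbove S := ⟨nextIn Λ (sSup M), hbound⟩
  set μ := sSup S with hμdef
  have hμΩ : μ < Ω :=
    lt_of_le_of_lt (csSup_le hSne hbound) (hΛsub (hnext _ hsupM).1)
  have key : μ ∈ S := by
    by_contra hμS
    have hlt : ∀ s ∈ S, s < μ := fun s hs =>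
      lt_of_le_of_ne (le_csSup hSbdd hs) fun h => hμS (h ▸ hs)
    -- μ is a limit point of both M and N
    have hlim : ∀ X : Set Ordinal, (∀ s ∈ S, s ∈ LambdaAt Λ X) → sSup (X ∩ Set.Iio μ) = μ := by
      intro X hXS
      refine le_antisymm (sSup_inter_Iio_le X μ) (le_of_forall_lt fun γ hγ => ?_)
      obtain ⟨s, hsS, hγs⟩ := exists_lt_of_lt_csSup hSne hγ
      obtain ⟨s', hs'S, hss'⟩ := exists_lt_of_lt_csSup hSne (hlt s hsS)
      have h1 : s < sSup (X ∩ Set.Iio s') := by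
        by_contra h
        push_neg at h
        have h2 : s' ≤ s := by
          have h3 := (hXS s' hs'S).2
          calc s' = sInf {δ ∈ Λ | sSup (X ∩ Set.Iio s') ≤ δ} := h3
            _ ≤ s := csInf_le (OrderBot.bddBelow _) ⟨(hXS s hsS).1, h⟩
        exact absurd h2 (not_le.2 hss')
      have h2 : sSup (X ∩ Set.Iio s') ≤ sSup (X ∩ Set.Iio μ) :=
        csSup_le_csSup' (bddAbove_Iio.mono inter_subset_right)
          (inter_subset_inter_right _ (Set.Iio_subset_Iio (le_of_lt (hlt s' hs'S))))
      exact lt_of_lt_of_le (hγs.trans h1) h2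
    have hMlim := hlim M fun s hs => hs.1
    have hNlim := hlim N fun s hs => hs.2
    obtain ⟨hδΛ, hμδ⟩ := hnext μ hμΩ
    -- then `nextIn Λ μ` belongs to S, contradicting that μ bounds S strictly
    have hmemX : ∀ X : Set Ordinal, sSup (X ∩ Set.Iio μ) = μ → nextIn Λ μ ∈ LambdaAt Λ X := by
      intro X hXlim
      set δ := nextIn Λ μ with hδdef
      refine ⟨hδΛ, ?_⟩
      have hsup_ge : μ ≤ sSup (X ∩ Set.Iio δ) := by
        rw [← hXlim]
        exact csSup_le_csSup' (bddAbove_Iio.mono inter_subset_right)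
          (inter_subset_inter_right _ (Set.Iio_subset_Iio hμδ))
      have hδin : δ ∈ {d ∈ Λ | sSup (X ∩ Set.Iio δ) ≤ d} := ⟨hδΛ, sSup_inter_Iio_le X δ⟩
      have h1 : sInf {d ∈ Λ | sSup (X ∩ Set.Iio δ) ≤ d} ≤ δ :=
        csInf_le (OrderBot.bddBelow _) hδin
      obtain ⟨hiΛ, hile⟩ := csInf_mem (⟨δ, hδin⟩ :
        {d ∈ Λ | sSup (X ∩ Set.Iio δ) ≤ d}.Nonempty)
      by_contra hne
      have hlt' : sInf {d ∈ Λ | sSup (X ∩ Set.Iio δ) ≤ d} < δ :=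
        lt_of_le_of_ne h1 fun h => hne h.symm
      have h4 : sInf {d ∈ Λ | sSup (X ∩ Set.Iio δ) ≤ d} < μ := by
        by_contra hge
        push_neg at hge
        exact absurd (csInf_le (OrderBot.bddBelow _) ⟨hiΛ, hge⟩ : δ ≤ _) (not_le.2 hlt')
      exact absurd hile (not_le.2 (lt_of_lt_of_le h4 hsup_ge))
    have hδS : nextIn Λ μ ∈ S := ⟨hmemX M hMlim, hmemX N hNlim⟩
    exact absurd hμδ (not_le.2 (hlt _ hδS))
  exact ⟨hSne, μ, key, fun s hs => le_csSup hSbdd hs⟩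
end

section
/- Let Λ be an unbounded subset of ω₂ consisting of ordinals of cofinality ω₁, and M, N countable subsets of ω₂ with comparison point β_{M,N} = max(Λ_M ∩ Λ_N). Suppose α ≤ γ are ordinals with α ∈ M ∪ lim(M) and γ ∈ N ∪ lim(N), and Λ ∩ [α, γ] = ∅. Then γ < β_{M,N}. -/
open Ordinal Cardinal Set

/-- A limit point of a countable set of ordinals below `ω₂` is below `ω₂`. -/
theorem limPts_lt_omega2 {N : Set Ordinal} (hN : N.Countable)
    (hNsub : N ⊆ Set.Iio (Cardinal.aleph 2).ord) {γ : Ordinal} (hγ : γ ∈ limPts N) :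
    γ < (Cardinal.aleph 2).ord := by
  obtain ⟨hsup, hpos⟩ := hγ
  have hne : (N ∩ Set.Iio γ).Nonempty := by
    rw [Set.nonempty_iff_ne_empty]
    intro h
    rw [h, csSup_empty, Ordinal.bot_eq_zero] at hsup
    exact hpos.ne' hsup.symm
  obtain ⟨f, hf⟩ := (hN.mono Set.inter_subset_left).exists_eq_range hne
  have hreg : Cardinal.IsRegular (Cardinal.aleph 2) := by
    have : (2 : Ordinal) = Order.succ 1 := by simp; exact one_add_one_eq_two.symm
    rw [this]
    exact Cardinal.isRegular_aleph_succ 1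
  have hcof : ((Cardinal.aleph 2).ord).cof = Cardinal.aleph 2 := hreg.cof_eq
  have : sSup (N ∩ Set.Iio γ) < (Cardinal.aleph 2).ord := by
    rw [hf, ← iSup]
    refine Ordinal.iSup_lt_ord_lift ?_ ?_
    · rw [hcof]
      simp only [Cardinal.mk_nat, Cardinal.lift_aleph0]
      exact Cardinal.aleph0_lt_aleph_one.trans (Cardinal.aleph_lt_aleph.2 one_lt_two)
    · intro i
      have : f i ∈ N ∩ Set.Iio γ := by rw [hf]; exact Set.mem_range_self i
      exact hNsub this.1
  rwa [hsup] at this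

/-- If `α ≤ γ`, `α ∈ M ∪ lim(M)`, `γ ∈ N ∪ lim(N)` and `Λ ∩ [α,γ] = ∅`,
    then `γ < β_{M,N}`. -/
theorem lt_comparison_point (Λ : Set Ordinal)
    (hΛsub : Λ ⊆ Set.Iio (Cardinal.aleph 2).ord)
    (hΛunbd : ∀ γ < (Cardinal.aleph 2).ord, ∃ β ∈ Λ, γ ≤ β)
    (hΛcof : ∀ β ∈ Λ, Ordinal.cof β = Cardinal.aleph 1)
    (M N : Set Ordinal) (hM : M.Countable) (hMsub : M ⊆ Set.Iio (Cardinal.aleph 2).ord)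
    (hN : N.Countable) (hNsub : N ⊆ Set.Iio (Cardinal.aleph 2).ord)
    (β : Ordinal) (hβ : IsGreatest (LambdaAt Λ M ∩ LambdaAt Λ N) β)
    (α γ : Ordinal) (hαγ : α ≤ γ)
    (hα : α ∈ M ∪ limPts M) (hγ : γ ∈ N ∪ limPts N)
    (hint : Λ ∩ Set.Icc α γ = ∅) :
    γ < β := by
  -- γ < ω₂
  have hγlt : γ < (Cardinal.aleph 2).ord := by
    rcases hγ with h | h
    · exact hNsub h
    · exact limPts_lt_omega2 hN hNsub h
  obtain ⟨β₀, hβ₀Λ, hβ₀γ⟩ := hΛunbd γ hγlt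
  set S : Set Ordinal := {δ ∈ Λ | α ≤ δ} with hSdef
  have hSne : S.Nonempty := ⟨β₀, hβ₀Λ, hαγ.trans hβ₀γ⟩
  have hβ'mem : sInf S ∈ S := csInf_mem hSne
  set β' := sInf S with hβ'def
  have hβ'Λ : β' ∈ Λ := hβ'mem.1
  have hαβ' : α ≤ β' := hβ'mem.2
  have hγβ' : γ < β' := by
    by_contra h
    push_neg at h
    have : β' ∈ Λ ∩ Set.Icc α γ := ⟨hβ'Λ, hαβ', h⟩
    rw [hint] at this
    exact this
  have key : ∀ (P : Set Ordinal) (x : Ordinal), x ≤ γ → α ≤ x → x ∈ P ∪ limPts P →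
      β' ∈ LambdaAt Λ P := by
    intro P x hxγ hαx hx
    have hxβ' : x < β' := lt_of_le_of_lt hxγ hγβ'
    have hbdd : BddAbove (P ∩ Set.Iio β') := ⟨β', fun y hy => le_of_lt hy.2⟩
    have hsup_ge : x ≤ sSup (P ∩ Set.Iio β') := by
      rcases hx with hxP | hxlim
      · exact le_csSup hbdd ⟨hxP, hxβ'⟩
      · obtain ⟨hx1, hx2⟩ := hxlim
        have hne : (P ∩ Set.Iio x).Nonempty := by
          rw [Set.nonempty_iff_ne_empty]
          intro h
          rw [h, csSup_empty, Ordinal.bot_eq_zero] at hx1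
          exact hx2.ne' hx1.symm
        calc x = sSup (P ∩ Set.Iio x) := hx1.symm
          _ ≤ sSup (P ∩ Set.Iio β') := by
            refine csSup_le_csSup hbdd hne ?_
            exact Set.inter_subset_inter_right _ (Set.Iio_subset_Iio hxβ'.le)
    have hsup_le : sSup (P ∩ Set.Iio β') ≤ β' := csSup_le' (fun y hy => le_of_lt hy.2)
    refine ⟨hβ'Λ, le_antisymm ?_ ?_⟩
    · refine le_csInf ⟨β', hβ'Λ, hsup_le⟩ ?_
      intro δ hδ
      exact csInf_le' ⟨hδ.1, hαx.trans (hsup_ge.trans hδ.2)⟩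
    · exact csInf_le' ⟨hβ'Λ, hsup_le⟩
  have hβ'M : β' ∈ LambdaAt Λ M := key M α hαγ le_rfl hα
  have hβ'N : β' ∈ LambdaAt Λ N := key N γ le_rfl hαγ hγ
  exact hγβ'.trans_le (hβ.2 ⟨hβ'M, hβ'N⟩)
end

section
/- Let Λ be an unbounded subset of ω₂ consisting of ordinals of cofinality ω₁, let M, N be countable subsets of ω₂, and let β ∈ Λ. If β_{M,N} ≤ β, then β_{M,N} = β_{M∩β, N}, where β_{M,N} denotes the comparison point max(Λ_M ∩ Λ_N). -/
open Ordinal Cardinal Set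

/-- A countable set of ordinals all below an ordinal of cofinality `ℵ₁` has sup below it. -/
lemma ssup_lt_of_countable {s : Set Ordinal} {β : Ordinal} (hs : s.Countable)
    (hsub : ∀ x ∈ s, x < β) (hcof : Ordinal.cof β = Cardinal.aleph 1) :
    sSup s < β := by
  have hβpos : (0 : Ordinal) < β := by
    by_contra h
    push_neg at h
    have : β = 0 := le_antisymm h (zero_le (a := β))
    rw [this, Ordinal.cof_zero] at hcof
    exact absurd hcof.symm (Cardinal.aleph_pos 1).ne'
  rcases s.eq_empty_or_nonempty with rfl | hne
  · simpa using hβpos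
  · obtain ⟨f, hf⟩ := (Set.countable_iff_exists_surjective hne).1 hs
    have hcard : Cardinal.lift.{u_1, 0} #ℕ < Ordinal.cof β := by
      rw [hcof]
      simpa using Cardinal.aleph0_lt_aleph_one
    have hlt : (⨆ n : ℕ, (f n : Ordinal)) < β :=
      Ordinal.iSup_lt_ord_lift hcard (fun n => hsub (f n) (f n).2)
    refine lt_of_le_of_lt (csSup_le hne fun x hx => ?_) hlt
    obtain ⟨n, hn⟩ := hf ⟨x, hx⟩
    exact le_of_eq (congrArg Subtype.val hn.symm) |>.trans
      (le_ciSup (Ordinal.bddAbove_range _) n)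

/-- Membership in `LambdaAt` only depends on `M` below the point, for points `≤ β`. -/
lemma lambdaAt_inter_iff (Λ M : Set Ordinal) (β δ : Ordinal) (hδ : δ ≤ β) :
    δ ∈ LambdaAt Λ M ↔ δ ∈ LambdaAt Λ (M ∩ Set.Iio β) := by
  have h : M ∩ Set.Iio δ = (M ∩ Set.Iio β) ∩ Set.Iio δ := by
    ext x
    constructor
    · rintro ⟨hxM, hxδ⟩; exact ⟨⟨hxM, lt_of_lt_of_le hxδ hδ⟩, hxδ⟩
    · rintro ⟨⟨hxM, _⟩, hxδ⟩; exact ⟨hxM, hxδ⟩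
  simp only [LambdaAt, Set.mem_setOf_eq, ← h]

/-- If `β_{M,N} ≤ β` with `β ∈ Λ`, then `β_{M,N} = β_{M ∩ β, N}`. -/
theorem comparison_point_inter (Λ : Set Ordinal)
    (hΛsub : Λ ⊆ Set.Iio (Cardinal.aleph 2).ord)
    (hΛunbd : ∀ γ < (Cardinal.aleph 2).ord, ∃ δ ∈ Λ, γ ≤ δ)
    (hΛcof : ∀ δ ∈ Λ, Ordinal.cof δ = Cardinal.aleph 1)
    (M N : Set Ordinal) (hM : M.Countable) (hMsub : M ⊆ Set.Iio (Cardinal.aleph 2).ord)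
    (hN : N.Countable) (hNsub : N ⊆ Set.Iio (Cardinal.aleph 2).ord)
    (β : Ordinal) (hβ : β ∈ Λ)
    (b : Ordinal) (hb : IsGreatest (LambdaAt Λ M ∩ LambdaAt Λ N) b)
    (b' : Ordinal) (hb' : IsGreatest (LambdaAt Λ (M ∩ Set.Iio β) ∩ LambdaAt Λ N) b')
    (hle : b ≤ β) :
    b = b' := by
  -- sup of M ∩ Iio β is below β
  have hsupβ : sSup (M ∩ Set.Iio β) < β :=
    ssup_lt_of_countable (hM.mono Set.inter_subset_left)
      (fun x hx => hx.2) (hΛcof β hβ)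
  -- every element of LambdaAt Λ (M ∩ Iio β) is ≤ β
  have hbound : ∀ δ ∈ LambdaAt Λ (M ∩ Set.Iio β), δ ≤ β := by
    intro δ hδ
    by_contra hgt
    push_neg at hgt
    have heq : (M ∩ Set.Iio β) ∩ Set.Iio δ = M ∩ Set.Iio β := by
      apply Set.inter_eq_left.2
      intro x hx
      exact lt_trans hx.2 hgt
    obtain ⟨hδΛ, hδeq⟩ := hδ
    rw [heq] at hδeq
    have : sInf {γ ∈ Λ | sSup (M ∩ Set.Iio β) ≤ γ} ≤ β :=
      csInf_le (OrderBot.bddBelow _) ⟨hβ, hsupβ.le⟩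
    rw [← hδeq] at this
    exact absurd this (not_le.2 hgt)
  have hb'leβ : b' ≤ β := hbound b' hb'.1.1
  apply le_antisymm
  · exact hb'.2 ⟨(lambdaAt_inter_iff Λ M β b hle).1 hb.1.1, hb.1.2⟩
  · exact hb.2 ⟨(lambdaAt_inter_iff Λ M β b' hb'leβ).2 hb'.1.1, hb'.1.2⟩
end

section
/- Let Λ be an unbounded subset of ω₂ consisting of ordinals of cofinality ω₁, and K, M, N countable subsets of ω₂ with M ⊆ N. Then the comparison points satisfy β_{K,M} ≤ β_{K,N}. -/
open Ordinal Cardinal Set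

lemma LambdaAt_mono {Λ M N : Set Ordinal} (hMN : M ⊆ N) :
    LambdaAt Λ M ⊆ LambdaAt Λ N := by
  rintro β ⟨hβΛ, hβeq⟩
  refine ⟨hβΛ, ?_⟩
  set sM := sSup (M ∩ Set.Iio β) with hsM
  set sN := sSup (N ∩ Set.Iio β) with hsN
  have hbdd : BddAbove (N ∩ Set.Iio β) := ⟨β, fun x hx => le_of_lt hx.2⟩
  have hMle : sM ≤ sN := csSup_le_csSup' hbdd (Set.inter_subset_inter_left _ hMN)
  have hNleβ : sN ≤ β := csSup_le' (fun x hx => le_of_lt hx.2)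
  have hsub : {δ ∈ Λ | sN ≤ δ} ⊆ {δ ∈ Λ | sM ≤ δ} :=
    fun δ hδ => ⟨hδ.1, le_trans hMle hδ.2⟩
  have hβmem : β ∈ {δ ∈ Λ | sN ≤ δ} := ⟨hβΛ, hNleβ⟩
  have h1 : sInf {δ ∈ Λ | sN ≤ δ} ≤ β := csInf_le' hβmem
  have h2 : β ≤ sInf {δ ∈ Λ | sN ≤ δ} := by
    rw [hβeq]
    exact csInf_le_csInf (OrderBot.bddBelow _) ⟨β, hβmem⟩ hsub
  exact le_antisymm h2 h1

/-- If `M ⊆ N`, then `β_{K,M} ≤ β_{K,N}`. -/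
theorem comparison_point_mono (Λ : Set Ordinal)
    (hΛsub : Λ ⊆ Set.Iio (Cardinal.aleph 2).ord)
    (hΛunbd : ∀ γ < (Cardinal.aleph 2).ord, ∃ δ ∈ Λ, γ ≤ δ)
    (hΛcof : ∀ δ ∈ Λ, Ordinal.cof δ = Cardinal.aleph 1)
    (K M N : Set Ordinal)
    (hK : K.Countable) (hKsub : K ⊆ Set.Iio (Cardinal.aleph 2).ord)
    (hM : M.Countable) (hMsub : M ⊆ Set.Iio (Cardinal.aleph 2).ord)
    (hN : N.Countable) (hNsub : N ⊆ Set.Iio (Cardinal.aleph 2).ord)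
    (hMN : M ⊆ N)
    (b₁ : Ordinal) (hb₁ : IsGreatest (LambdaAt Λ K ∩ LambdaAt Λ M) b₁)
    (b₂ : Ordinal) (hb₂ : IsGreatest (LambdaAt Λ K ∩ LambdaAt Λ N) b₂) :
    b₁ ≤ b₂ :=
  hb₂.2 ⟨hb₁.1.1, LambdaAt_mono hMN hb₁.1.2⟩
end

section
/- Let N be a countable set of ordinals closed in the following sense: for every β ∈ Λ with β < sup(N), min(N \ β) ∈ Λ, where Λ is a fixed unbounded class of ordinals. Let M be a set of ordinals and σ : M → N an order isomorphism such that for every δ ∈ M, δ ∈ Λ iff σ(δ) ∈ Λ. If α < γ are both in M and Λ ∩ [α, γ] = ∅, then Λ ∩ [σ(α), σ(γ)] = ∅. -/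
open Ordinal Set

/-- If `σ : M → N` is an order isomorphism preserving membership in `Λ`,
    `N` is closed in the sense that `min(N \ β) ∈ Λ` for `β ∈ Λ` below `sup N`,
    and `Λ ∩ [α,γ] = ∅` for `α < γ` in `M`, then `Λ ∩ [σ(α),σ(γ)] = ∅`. -/
theorem lambda_interval_preserved (Λ : Set Ordinal)
    (hΛunbd : ∀ o : Ordinal, ∃ β ∈ Λ, o ≤ β)
    (M N : Set Ordinal) (hN : N.Countable)
    (hNclosed : ∀ β ∈ Λ, β < sSup N → sInf {δ ∈ N | β ≤ δ} ∈ Λ)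
    (σ : Ordinal → Ordinal)
    (hmaps : ∀ x ∈ M, σ x ∈ N)
    (hsurj : ∀ y ∈ N, ∃ x ∈ M, σ x = y)
    (hmono : ∀ x ∈ M, ∀ y ∈ M, x < y ↔ σ x < σ y)
    (hΛpres : ∀ δ ∈ M, (δ ∈ Λ ↔ σ δ ∈ Λ))
    (α γ : Ordinal) (hα : α ∈ M) (hγ : γ ∈ M) (hαγ : α < γ)
    (hint : Λ ∩ Set.Icc α γ = ∅) :
    Λ ∩ Set.Icc (σ α) (σ γ) = ∅ := by
  ext β
  simp only [Set.mem_inter_iff, Set.mem_Icc, Set.mem_empty_iff_false, iff_false, not_and, and_imp]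
  intro hβΛ hβ1 hβ2
  have hemp : ∀ x, x ∈ Λ → α ≤ x → x ≤ γ → False := by
    intro x hx h1 h2
    have : x ∈ Λ ∩ Set.Icc α γ := ⟨hx, h1, h2⟩
    rw [hint] at this; exact this
  rcases eq_or_lt_of_le hβ2 with h | h
  · exact hemp γ ((hΛpres γ hγ).2 (h ▸ hβΛ)) hαγ.le le_rfl
  · have : Countable N := hN.to_subtype
    have hbdd : BddAbove N := Ordinal.bddAbove_of_small
    have hlt : β < sSup N := h.trans_le (le_csSup hbdd (hmaps γ hγ))
    have hδΛ := hNclosed β hβΛ hlt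
    have hmem : sInf {δ ∈ N | β ≤ δ} ∈ {δ ∈ N | β ≤ δ} :=
      csInf_mem ⟨σ γ, hmaps γ hγ, h.le⟩
    have hδle : sInf {δ ∈ N | β ≤ δ} ≤ σ γ := csInf_le' ⟨hmaps γ hγ, h.le⟩
    obtain ⟨x, hxM, hxσ⟩ := hsurj _ hmem.1
    have hxγ : x ≤ γ := le_of_not_gt fun hc =>
      absurd ((hmono γ hγ x hxM).1 hc) (by rw [hxσ]; exact not_lt.2 hδle)
    have hαx : α ≤ x := le_of_not_gt fun hc =>
      absurd ((hmono x hxM α hα).1 hc)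
        (by rw [hxσ]; exact not_lt.2 (le_trans hβ1 hmem.2))
    exact hemp x ((hΛpres x hxM).2 (hxσ ▸ hδΛ)) hαx hxγ
end

section
/- For every ordinal ξ < ω₂ there exists a sequence ⟨e_β : β < ξ, cof(β) = ω₁⟩ such that each e_β is a club subset of β of order type ω₁, and for distinct β, β′, the sets e_β and e_{β′} have no common limit points: there is no ordinal δ with sup(e_β ∩ δ) = δ = sup(e_{β′} ∩ δ) > 0. -/
open Ordinal Cardinal Set

noncomputable section DLC

def Club (β : Ordinal) (s : Set Ordinal) : Prop :=
  s ⊆ Set.Iio β ∧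
  (∀ x < β, ∃ y ∈ s, x ≤ y) ∧
  (∀ δ < β, 0 < δ → sSup (s ∩ Set.Iio δ) = δ → δ ∈ s) ∧
  Ordinal.type ((· < ·) : ↥s → ↥s → Prop) = (Cardinal.aleph 1).ord

def Good (ξ : Ordinal) (e : Ordinal → Set Ordinal) : Prop :=
  (∀ β, β < ξ → Ordinal.cof β = Cardinal.aleph 1 → Club β (e β)) ∧
  (∀ β β', β < ξ → β' < ξ → Ordinal.cof β = Cardinal.aleph 1 →
    Ordinal.cof β' = Cardinal.aleph 1 → β ≠ β' →
    ¬ ∃ δ : Ordinal, 0 < δ ∧ sSup (e β ∩ Set.Iio δ) = δ ∧ sSup (e β' ∩ Set.Iio δ) = δ)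

-- basic sSup helpers
lemma sSup_le_of_subset_Iio {X : Set Ordinal} {δ : Ordinal} (h : X ⊆ Set.Iio δ) :
    sSup X ≤ δ := by
  rcases X.eq_empty_or_nonempty with rfl | hne
  · rw [csSup_empty]; exact bot_le
  · exact csSup_le hne fun x hx => (h hx).le

lemma nonempty_of_sSup_pos {X : Set Ordinal} (h : sSup X ≠ 0) : X.Nonempty := by
  rcases X.eq_empty_or_nonempty with rfl | hne
  · exact absurd (by simp) h
  · exact hne

lemma bddAbove_of_subset_Iio {X : Set Ordinal} {δ : Ordinal} (h : X ⊆ Set.Iio δ) :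
    BddAbove X := ⟨δ, fun x hx => (h hx).le⟩

lemma sSup_eq_of_subset {X Y : Set Ordinal} {δ : Ordinal} (hXY : X ⊆ Y)
    (hY : Y ⊆ Set.Iio δ) (hδ : 0 < δ) (hX : sSup X = δ) : sSup Y = δ := by
  refine le_antisymm (sSup_le_of_subset_Iio hY) ?_
  have hne : X.Nonempty := nonempty_of_sSup_pos (by rw [hX]; exact hδ.ne')
  calc δ = sSup X := hX.symm
    _ ≤ sSup Y := csSup_le_csSup (bddAbove_of_subset_Iio hY) hne hXY

-- order type helpers
lemma type_le_type_of_subset {S U : Set Ordinal} (h : S ⊆ U) :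
    Ordinal.type ((· < ·) : ↥S → ↥S → Prop) ≤ Ordinal.type ((· < ·) : ↥U → ↥U → Prop) := by
  exact RelEmbedding.ordinal_type_le
    ⟨⟨Set.inclusion h, Set.inclusion_injective h⟩, Iff.rfl⟩

lemma type_eq_omega1 {S : Set Ordinal}
    (h1 : Ordinal.type ((· < ·) : ↥S → ↥S → Prop) ≤ (Cardinal.aleph 1).ord)
    (h2 : Cardinal.aleph 1 ≤ #↥S) :
    Ordinal.type ((· < ·) : ↥S → ↥S → Prop) = (Cardinal.aleph 1).ord := by
  refine le_antisymm h1 ?_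
  have : Cardinal.aleph 1 ≤ (Ordinal.type ((· < ·) : ↥S → ↥S → Prop)).card := by
    rwa [Ordinal.card_type]
  exact (Cardinal.ord_le_ord.2 this).trans (Cardinal.ord_card_le _)

lemma type_Iio_set (o : Ordinal.{u}) :
    Ordinal.type ((· < ·) : ↥(Set.Iio o) → ↥(Set.Iio o) → Prop) = Ordinal.lift.{u+1} o := by
  rw [← Ordinal.typein_ordinal o]
  rfl

lemma card_initial_lt {S : Set Ordinal}
    (htype : Ordinal.type ((· < ·) : ↥S → ↥S → Prop) = (Cardinal.aleph 1).ord)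
    {y : Ordinal} (hy : y ∈ S) {U : Set Ordinal} (hU : U ⊆ S ∩ Set.Iio y) :
    #↥U < Cardinal.aleph 1 := by
  have hinj : #↥U ≤ #{b : ↥S // (b : Ordinal) < y} := by
    refine Cardinal.mk_le_of_injective (f := fun x => ⟨⟨x.1, (hU x.2).1⟩, (hU x.2).2⟩) ?_
    intro a b hab
    exact Subtype.ext (congrArg (fun z : {b : ↥S // (b : Ordinal) < y} => (z.1.1 : Ordinal)) hab)
  have hcard : #{b : ↥S // (b : ↥S) < (⟨y, hy⟩ : ↥S)} =
      (Ordinal.typein ((· < ·) : ↥S → ↥S → Prop) ⟨y, hy⟩).card :=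
    Ordinal.card_typein _
  have hlt : Ordinal.typein ((· < ·) : ↥S → ↥S → Prop) ⟨y, hy⟩ < (Cardinal.aleph 1).ord :=
    htype ▸ Ordinal.typein_lt_type _ _
  have := Cardinal.lt_ord.1 hlt
  calc #↥U ≤ _ := hinj
    _ < Cardinal.aleph 1 := by rw [show #{b : ↥S // (b : Ordinal) < y} = #{b : ↥S // (b : ↥S) < (⟨y, hy⟩ : ↥S)} from rfl, hcard]; exact this

lemma Good.mono {ξ ξ' : Ordinal} {e : Ordinal → Set Ordinal} (h : Good ξ' e)
    (hred : ∀ β, β < ξ → Ordinal.cof β = Cardinal.aleph 1 → β < ξ') : Good ξ e :=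
  ⟨fun β hβ hc => h.1 β (hred β hβ hc) hc,
   fun β β' hβ hβ' hc hc' hne => h.2 β β' (hred _ hβ hc) (hred _ hβ' hc') hc hc' hne⟩

lemma good_zero : Good 0 (fun _ => (∅ : Set Ordinal)) :=
  ⟨fun β hβ _ => absurd hβ (by simp),
   fun β _ hβ _ _ _ _ => absurd hβ (by simp)⟩

lemma cof_isLimit {β : Ordinal} (h : Ordinal.cof β = Cardinal.aleph 1) : Order.IsSuccLimit β := by
  rcases Ordinal.zero_or_succ_or_isSuccLimit β with h0 | ⟨a, ha⟩ | hl
  · rw [h0, Ordinal.cof_zero] at h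
    exact absurd h.symm (Cardinal.aleph_pos 1).ne'
  · rw [← ha, Ordinal.cof_succ] at h
    exact absurd h (Cardinal.one_lt_aleph0.trans_le (Cardinal.aleph0_le_aleph 1)).ne
  · exact hl


lemma glue {μ : Ordinal} (hlim : Order.IsSuccLimit μ) (hμ : μ < (Cardinal.aleph 2).ord)
    (IH : ∀ ζ, ζ < μ → ∃ e, Good ζ e) : ∃ e, Good (μ + 1) e := by
  classical
  set ν₀ : Ordinal := (Ordinal.cof μ).ord with hν₀def
  obtain ⟨f, hf⟩ := Ordinal.exists_fundamental_sequence μ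
  have hcofinf : ℵ₀ ≤ Ordinal.cof μ := Ordinal.aleph0_le_cof.2 hlim
  have hν₀lim : Order.IsSuccLimit ν₀ := Cardinal.isSuccLimit_ord hcofinf
  have hν₀le : ν₀ ≤ (Cardinal.aleph 1).ord := by
    refine Cardinal.ord_le_ord.2 ((Ordinal.cof_le_card μ).trans ?_)
    have h2 : μ.card < Cardinal.aleph 2 := Cardinal.lt_ord.1 hμ
    have h3 : Cardinal.aleph 2 = Order.succ (Cardinal.aleph 1) := by
      rw [show (2 : Ordinal) = Order.succ 1 by
            rw [← Ordinal.add_one_eq_succ, one_add_one_eq_two],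
          Cardinal.aleph_succ]
    rw [h3, Order.lt_succ_iff] at h2
    exact h2
  obtain ⟨G, hGdef⟩ : ∃ G : Ordinal → Ordinal,
      ∀ j, G j = (if h : j < ν₀ then f j h else 0) + 1 := ⟨_, fun _ => rfl⟩
  have hGf : ∀ j (h : j < ν₀), G j = f j h + 1 := fun j h => by rw [hGdef]; simp [h]
  obtain ⟨c, hcdef⟩ : ∃ c : Ordinal → Ordinal,
      ∀ i, c i = Ordinal.bsup i (fun j _ => G j) := ⟨_, fun _ => rfl⟩
  have hflt : ∀ j (h : j < ν₀), f j h < μ := fun j h => hf.lt h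
  have hcmono : ∀ {i i' : Ordinal}, i ≤ i' → c i ≤ c i' := by
    intro i i' h
    rw [hcdef, hcdef]
    exact Ordinal.bsup_le fun j hj => Ordinal.le_bsup _ j (hj.trans_le h)
  have hc0 : c 0 = 0 := by rw [hcdef]; exact Ordinal.bsup_zero _
  have hclef : ∀ i (h : i < ν₀), c i ≤ f i h := by
    intro i h
    rw [hcdef]
    refine Ordinal.bsup_le fun j hj => ?_
    rw [hGf j (hj.trans h), Ordinal.add_one_eq_succ, Order.succ_le_iff]
    exact hf.2.1 _ _ hj
  have hclt : ∀ i, i < ν₀ → c i < μ := fun i h => (hclef i h).trans_lt (hflt i h)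
  have hcsucc : ∀ i, i < ν₀ → c (i + 1) = G i := by
    intro i h
    rw [hcdef]
    refine le_antisymm (Ordinal.bsup_le fun j hj => ?_) (Ordinal.le_bsup _ i ?_)
    · rw [Ordinal.add_one_eq_succ, Order.lt_succ_iff] at hj
      rcases lt_or_eq_of_le hj with hlt | rfl
      · rw [hGf j (hlt.trans h), hGf i h]
        exact add_le_add_left (hf.monotone (hlt.trans h) h hlt.le) 1
      · exact le_rfl
    · rw [Ordinal.add_one_eq_succ]; exact Order.lt_succ i
  have hGlt : ∀ i (h : i < ν₀), c i < G i := by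
    intro i h
    refine (hclef i h).trans_lt ?_
    rw [hGf i h, Ordinal.add_one_eq_succ]
    exact Order.lt_succ _
  have hcstrict : ∀ {i i' : Ordinal}, i < i' → i < ν₀ → c i < c i' := by
    intro i i' h hi
    refine (hGlt i hi).trans_le (le_trans ?_ (hcmono (show i + 1 ≤ i' by
      rw [Ordinal.add_one_eq_succ]; exact Order.succ_le_iff.2 h)))
    rw [hcdef]
    refine Ordinal.le_bsup _ i ?_
    rw [Ordinal.add_one_eq_succ]; exact Order.lt_succ i
  have hcofinal : ∀ x, x < μ → ∃ i, i + 1 < ν₀ ∧ x < c (i + 1) := by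
    intro x hx
    have hx' : x < Ordinal.blsub ν₀ f := by
      rw [show Ordinal.blsub ν₀ f = μ from hf.blsub_eq]; exact hx
    obtain ⟨j, hj, hxf⟩ := Ordinal.lt_blsub_iff.1 hx'
    refine ⟨j, ?_, ?_⟩
    · rw [Ordinal.add_one_eq_succ]; exact hν₀lim.succ_lt hj
    · rw [hcsucc j hj, hGf j hj, Ordinal.add_one_eq_succ, Order.lt_succ_iff]
      exact hxf
  -- the auxiliary club systems
  have hEex : ∀ i : Ordinal, ∃ Ei : Ordinal → Set Ordinal,
      i + 1 < ν₀ → Good (c (i + 1) + 1) Ei := by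
    intro i
    by_cases h : i + 1 < ν₀
    · obtain ⟨Ei, hEi⟩ := IH (c (i + 1) + 1)
        (by rw [Ordinal.add_one_eq_succ]; exact hlim.succ_lt (hclt _ h))
      exact ⟨Ei, fun _ => hEi⟩
    · exact ⟨fun _ => ∅, fun h' => absurd h' h⟩
  choose E hE using hEex
  obtain ⟨jj, hjjdef⟩ : ∃ jj : Ordinal → Ordinal,
      ∀ β, jj β = sInf {i | β ≤ c (i + 1)} := ⟨_, fun _ => rfl⟩
  -- key facts about jj for qualifying β
  have key : ∀ β, β < μ → Ordinal.cof β = Cardinal.aleph 1 →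
      β ≤ c (jj β + 1) ∧ c (jj β) < β ∧ jj β + 1 < ν₀ := by
    intro β hβμ hcof
    have hβ0 : 0 < β := (cof_isLimit hcof).pos
    obtain ⟨i₀, hi₀ν, hi₀⟩ := hcofinal β hβμ
    have hne : {i | β ≤ c (i + 1)}.Nonempty := ⟨i₀, hi₀.le⟩
    have hmem : β ≤ c (jj β + 1) := by rw [hjjdef]; exact csInf_mem hne
    have hjle : jj β ≤ i₀ := by rw [hjjdef]; exact csInf_le' hi₀.le
    have h3 : jj β + 1 < ν₀ := lt_of_le_of_lt (add_le_add_left hjle 1) hi₀ν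
    have hjν : jj β < ν₀ := lt_of_le_of_lt (by
      rw [Ordinal.add_one_eq_succ]; exact (Order.le_succ _)) h3
    refine ⟨hmem, ?_, h3⟩
    by_contra hcon
    push_neg at hcon
    rcases eq_or_lt_of_le hcon with heq | hlt
    · -- β = c (jj β)
      rcases Ordinal.zero_or_succ_or_isSuccLimit (jj β) with h0 | ⟨a, ha⟩ | hl
      · rw [h0, hc0] at heq
        exact absurd heq hβ0.ne'
      · have haν : a < ν₀ := by
          rw [← ha] at hjν
          exact lt_trans (Order.lt_succ a) hjν
        rw [← ha, ← Ordinal.add_one_eq_succ, hcsucc a haν, hGf a haν,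
          Ordinal.add_one_eq_succ] at heq
        rw [heq, Ordinal.cof_succ] at hcof
        exact absurd hcof (Cardinal.one_lt_aleph0.trans_le (Cardinal.aleph0_le_aleph 1)).ne
      · -- jj β limit
        have hbsup : ∀ j (hj : j < jj β), G j <
            Ordinal.bsup (jj β) (fun j _ => G j) := by
          intro j hj
          have hjν' : j < ν₀ := hj.trans hjν
          have hj1 : j + 1 < jj β := by
            rw [Ordinal.add_one_eq_succ]; exact hl.succ_lt hj
          have hj1ν : j + 1 < ν₀ := hj1.trans hjν
          calc G j < G (j + 1) := by
                rw [hGf j hjν', hGf (j + 1) hj1ν, Ordinal.add_one_eq_succ,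
                  Ordinal.add_one_eq_succ]
                exact Order.succ_lt_succ (hf.2.1 _ _ (by
                  rw [Ordinal.add_one_eq_succ]; exact Order.lt_succ j))
            _ ≤ _ := Ordinal.le_bsup _ (j + 1) hj1
        have hcard : Ordinal.cof (Ordinal.bsup (jj β) (fun j _ => G j)) ≤ (jj β).card :=
          Ordinal.cof_bsup_le hbsup
        rw [← hcdef (jj β), ← heq, hcof] at hcard
        have : (jj β).card < Cardinal.aleph 1 := Cardinal.lt_ord.1 (hjν.trans_le hν₀le)
        exact absurd (hcard.trans_lt this) (lt_irrefl _)
    · -- β < c (jj β)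
      rw [hcdef (jj β)] at hlt
      obtain ⟨k, hk, hβk⟩ := (Ordinal.lt_bsup _).1 hlt
      have hkν : k < ν₀ := hk.trans hjν
      have : β ≤ c (k + 1) := by rw [hcsucc k hkν]; exact hβk.le
      have := csInf_le' (s := {i | β ≤ c (i + 1)}) this
      rw [← hjjdef] at this
      exact absurd (this.trans_lt hk) (lt_irrefl _)
  -- the top club and the sequence itself
  obtain ⟨T, hTdef⟩ : ∃ T : Set Ordinal, T = c '' Set.Iio ν₀ := ⟨_, rfl⟩
  obtain ⟨e, hedef⟩ : ∃ e : Ordinal → Set Ordinal,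
      ∀ β, e β = if β = μ then T else E (jj β) β ∩ Set.Ioi (c (jj β)) := ⟨_, fun _ => rfl⟩
  have hesmall : ∀ β, β < μ → e β = E (jj β) β ∩ Set.Ioi (c (jj β)) := by
    intro β hβ; rw [hedef, if_neg hβ.ne]
  -- the clubs at small β
  have club_small : ∀ β, β < μ → Ordinal.cof β = Cardinal.aleph 1 → Club β (e β) := by
    intro β hβμ hcof
    rw [hesmall β hβμ]
    have hβlim := cof_isLimit hcof
    obtain ⟨hk1, hk2, hk3⟩ := key β hβμ hcof
    have hGoodE := hE (jj β) hk3
    have hβlt : β < c (jj β + 1) + 1 := by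
      rw [Ordinal.add_one_eq_succ]
      exact hk1.trans_lt (Order.lt_succ _)
    obtain ⟨hA1, hA2, hA3, hA4⟩ := hGoodE.1 β hβlt hcof
    have hc1β : c (jj β) + 1 < β := by
      rw [Ordinal.add_one_eq_succ]
      exact hβlim.succ_lt hk2
    refine ⟨fun x hx => hA1 hx.1, ?_, ?_, ?_⟩
    · -- unbounded
      intro x hx
      obtain ⟨y, hyA, hy⟩ := hA2 (max x (c (jj β) + 1)) (max_lt hx hc1β)
      refine ⟨y, ⟨hyA, ?_⟩, (le_max_left _ _).trans hy⟩
      have h' : c (jj β) < c (jj β) + 1 := by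
        rw [Ordinal.add_one_eq_succ]; exact Order.lt_succ _
      exact h'.trans_le ((le_max_right _ _).trans hy)
    · -- closed
      intro δ hδβ hδ0 hsup
      obtain ⟨z, hz⟩ : ((E (jj β) β ∩ Set.Ioi (c (jj β))) ∩ Set.Iio δ).Nonempty :=
        nonempty_of_sSup_pos (by rw [hsup]; exact hδ0.ne')
      have hsupA : sSup (E (jj β) β ∩ Set.Iio δ) = δ :=
        sSup_eq_of_subset (fun w hw => ⟨hw.1.1, hw.2⟩) (fun w hw => hw.2) hδ0 hsup
      exact ⟨hA3 δ hδβ hδ0 hsupA, Set.mem_Ioi.2 (lt_trans (Set.mem_Ioi.1 hz.1.2) (Set.mem_Iio.1 hz.2))⟩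
    · -- order type
      obtain ⟨y₀, hy₀A, hy₀⟩ := hA2 (c (jj β) + 1) hc1β
      refine type_eq_omega1 ?_ ?_
      · rw [← hA4]
        exact type_le_type_of_subset Set.inter_subset_left
      · by_contra hcard
        push_neg at hcard
        have hAcard : #↥(E (jj β) β) = Cardinal.aleph 1 := by
          rw [← Ordinal.card_type ((· < ·) : ↥(E (jj β) β) → ↥(E (jj β) β) → Prop), hA4,
            Cardinal.card_ord]
        have hsplit : E (jj β) β ⊆
            (E (jj β) β ∩ Set.Iic (c (jj β))) ∪ (E (jj β) β ∩ Set.Ioi (c (jj β))) := by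
          intro a ha
          rcases le_or_gt a (c (jj β)) with h | h
          · exact Or.inl ⟨ha, h⟩
          · exact Or.inr ⟨ha, h⟩
        have hi : #↥(E (jj β) β ∩ Set.Iic (c (jj β))) < Cardinal.aleph 1 := by
          refine card_initial_lt hA4 hy₀A (fun w hw => ⟨hw.1, ?_⟩)
          have h2 : (w : Ordinal) < c (jj β) + 1 := by
            rw [Ordinal.add_one_eq_succ, Order.lt_succ_iff]; exact hw.2
          exact h2.trans_le hy₀
        have hsum := Cardinal.add_lt_of_lt (Cardinal.aleph0_le_aleph 1) hi hcard
        have hle := (Cardinal.mk_le_mk_of_subset hsplit).trans (Cardinal.mk_union_le _ _)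
        rw [hAcard] at hle
        exact absurd (hle.trans_lt hsum) (lt_irrefl _)
  -- the top club
  have club_top : Ordinal.cof μ = Cardinal.aleph 1 → Club μ T := by
    intro hcofμ
    rw [hTdef]
    refine ⟨?_, ?_, ?_, ?_⟩
    · rintro x ⟨i, hi, rfl⟩
      exact hclt i hi
    · intro x hx
      obtain ⟨i, hi, hxc⟩ := hcofinal x hx
      exact ⟨c (i + 1), ⟨i + 1, hi, rfl⟩, hxc.le⟩
    · intro δ hδμ hδ0 hsup
      obtain ⟨i₁, hi₁ν, hδi₁⟩ := hcofinal δ hδμ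
      have hkne : {i | δ ≤ c i}.Nonempty := ⟨i₁ + 1, hδi₁.le⟩
      have hkmem : δ ≤ c (sInf {i | δ ≤ c i}) := csInf_mem hkne
      have hklt : sInf {i | δ ≤ c i} < ν₀ := lt_of_le_of_lt (csInf_le' hδi₁.le) hi₁ν
      rcases eq_or_lt_of_le hkmem with heq | hlt
      · exact ⟨_, hklt, heq.symm⟩
      · exfalso
        rcases Ordinal.zero_or_succ_or_isSuccLimit (sInf {i | δ ≤ c i}) with h0 | ⟨a, ha⟩ | hl
        · rw [h0, hc0] at hlt
          exact absurd hlt (by simp)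
        · have halt : a < sInf {i | δ ≤ c i} := by rw [← ha]; exact Order.lt_succ a
          have hca : c a < δ := by
            by_contra hcon
            push_neg at hcon
            have h'' : sInf {i | δ ≤ c i} ≤ a := csInf_le' (s := {i | δ ≤ c i}) hcon
            exact absurd h'' (not_le.2 halt)
          have hbound : sSup (c '' Set.Iio ν₀ ∩ Set.Iio δ) ≤ c a := by
            rcases (c '' Set.Iio ν₀ ∩ Set.Iio δ).eq_empty_or_nonempty with hemp | hne2
            · rw [hemp, csSup_empty]; exact bot_le
            · refine csSup_le hne2 ?_
              rintro x ⟨⟨m, hm, rfl⟩, hxδ⟩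
              by_contra hma
              push_neg at hma
              have ham : sInf {i | δ ≤ c i} ≤ m := by
                rw [← ha, Order.succ_le_iff]
                by_contra h'
                push_neg at h'
                exact absurd (hcmono h') (not_le.2 hma)
              exact absurd (hkmem.trans (hcmono ham)) (not_le.2 hxδ)
          rw [hsup] at hbound
          exact absurd (hbound.trans_lt hca) (lt_irrefl δ)
        · rw [hcdef (sInf {i | δ ≤ c i})] at hlt
          obtain ⟨m, hm, hδm⟩ := (Ordinal.lt_bsup _).1 hlt
          have hmν : m < ν₀ := hm.trans hklt
          have h1 : δ ≤ c (m + 1) := by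
            rw [hcsucc m hmν]; exact hδm.le
          have h2 : sInf {i | δ ≤ c i} ≤ m + 1 := csInf_le' h1
          have h3 : m + 1 < sInf {i | δ ≤ c i} := by
            rw [Ordinal.add_one_eq_succ]; exact hl.succ_lt hm
          exact absurd (h2.trans_lt h3) (lt_irrefl _)
    · -- order type of the top club
      have hmono : StrictMonoOn c (Set.Iio ν₀) := fun i hi i' _ h => hcstrict h hi
      refine Eq.trans
        (Ordinal.type_eq.2 ⟨(StrictMonoOn.orderIso c _ hmono).toRelIsoLT.symm⟩)
        (Eq.trans (type_Iio_set ν₀) ?_)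
      rw [hν₀def, hcofμ, Cardinal.lift_ord, Cardinal.lift_aleph, Ordinal.lift_one]
  -- transferring suprema information
  have sup_trans : ∀ β δ, β < μ → Ordinal.cof β = Cardinal.aleph 1 → 0 < δ →
      sSup (e β ∩ Set.Iio δ) = δ →
      sSup (E (jj β) β ∩ Set.Iio δ) = δ ∧ c (jj β) < δ ∧ δ ≤ β := by
    intro β δ hβμ hcof hδ0 hsup
    rw [hesmall β hβμ] at hsup
    obtain ⟨hk1, hk2, hk3⟩ := key β hβμ hcof
    have hGoodE := hE (jj β) hk3
    have hβlt : β < c (jj β + 1) + 1 := by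
      rw [Ordinal.add_one_eq_succ]; exact hk1.trans_lt (Order.lt_succ _)
    obtain ⟨hA1, -, -, -⟩ := hGoodE.1 β hβlt hcof
    obtain ⟨z, hz⟩ : ((E (jj β) β ∩ Set.Ioi (c (jj β))) ∩ Set.Iio δ).Nonempty :=
      nonempty_of_sSup_pos (by rw [hsup]; exact hδ0.ne')
    refine ⟨sSup_eq_of_subset (fun w hw => ⟨hw.1.1, hw.2⟩) (fun w hw => hw.2) hδ0 hsup,
      lt_trans hz.1.2 hz.2, ?_⟩
    rw [← hsup]
    exact sSup_le_of_subset_Iio (fun w hw => hA1 hw.1.1)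
  -- pairwise disjointness of limit points, both clubs below μ
  have pair_small : ∀ β β', β < μ → β' < μ → Ordinal.cof β = Cardinal.aleph 1 →
      Ordinal.cof β' = Cardinal.aleph 1 → β ≠ β' →
      ∀ δ, 0 < δ → sSup (e β ∩ Set.Iio δ) = δ → sSup (e β' ∩ Set.Iio δ) = δ → False := by
    have hasym : ∀ β β' δ, β < μ → β' < μ → Ordinal.cof β = Cardinal.aleph 1 →
        Ordinal.cof β' = Cardinal.aleph 1 → jj β < jj β' → 0 < δ →
        sSup (e β ∩ Set.Iio δ) = δ → sSup (e β' ∩ Set.Iio δ) = δ → False := by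
      intro β β' δ hβ hβ' hcof hcof' hjlt hδ0 hs hs'
      obtain ⟨-, -, hδβ⟩ := sup_trans β δ hβ hcof hδ0 hs
      obtain ⟨-, hcδ', -⟩ := sup_trans β' δ hβ' hcof' hδ0 hs'
      obtain ⟨hk1, -, -⟩ := key β hβ hcof
      have h' : δ ≤ c (jj β') :=
        hδβ.trans (hk1.trans (hcmono (by
          rw [Ordinal.add_one_eq_succ]; exact Order.succ_le_iff.2 hjlt)))
      exact absurd (h'.trans_lt hcδ') (lt_irrefl δ)
    intro β β' hβ hβ' hcof hcof' hne δ hδ0 hs hs'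
    rcases lt_trichotomy (jj β) (jj β') with h | h | h
    · exact hasym β β' δ hβ hβ' hcof hcof' h hδ0 hs hs'
    · obtain ⟨hsA, -, -⟩ := sup_trans β δ hβ hcof hδ0 hs
      obtain ⟨hsA', -, -⟩ := sup_trans β' δ hβ' hcof' hδ0 hs'
      obtain ⟨hk1, -, hk3⟩ := key β hβ hcof
      obtain ⟨hk1', -, -⟩ := key β' hβ' hcof'
      have hGoodE := hE (jj β) hk3
      have hβlt : β < c (jj β + 1) + 1 := by
        rw [Ordinal.add_one_eq_succ]; exact hk1.trans_lt (Order.lt_succ _)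
      have hβ'lt : β' < c (jj β + 1) + 1 := by
        rw [Ordinal.add_one_eq_succ, h]
        exact hk1'.trans_lt (Order.lt_succ _)
      exact hGoodE.2 β β' hβlt hβ'lt hcof hcof' hne
        ⟨δ, hδ0, hsA, by rw [h]; exact hsA'⟩
    · exact hasym β' β δ hβ' hβ hcof' hcof h hδ0 hs' hs
  -- pairwise disjointness, one club is the top club
  have pair_mixed : ∀ β δ, β < μ → Ordinal.cof β = Cardinal.aleph 1 → 0 < δ →
      sSup (e β ∩ Set.Iio δ) = δ → sSup (e μ ∩ Set.Iio δ) = δ → False := by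
    intro β δ hβ hcof hδ0 hs hsT
    obtain ⟨-, hcδ, hδβ⟩ := sup_trans β δ hβ hcof hδ0 hs
    obtain ⟨hk1, -, -⟩ := key β hβ hcof
    have heμ : e μ = T := by rw [hedef, if_pos rfl]
    rw [heμ, hTdef] at hsT
    have hbound : sSup (c '' Set.Iio ν₀ ∩ Set.Iio δ) ≤ c (jj β) := by
      rcases (c '' Set.Iio ν₀ ∩ Set.Iio δ).eq_empty_or_nonempty with hemp | hne2
      · rw [hemp, csSup_empty]; exact bot_le
      · refine csSup_le hne2 ?_
        rintro x ⟨⟨m, hm, rfl⟩, hxδ⟩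
        by_contra hmc
        push_neg at hmc
        have ham : jj β + 1 ≤ m := by
          rw [Ordinal.add_one_eq_succ, Order.succ_le_iff]
          by_contra h'
          push_neg at h'
          exact absurd (hcmono h') (not_le.2 hmc)
        have h2 : δ ≤ c m := hδβ.trans (hk1.trans (hcmono ham))
        exact absurd h2 (not_le.2 hxδ)
    rw [hsT] at hbound
    exact absurd (hbound.trans_lt hcδ) (lt_irrefl δ)
  -- assembling
  refine ⟨e, ?_, ?_⟩
  · intro β hβ hcof
    have hβle : β ≤ μ := by
      rw [Ordinal.add_one_eq_succ] at hβ
      exact Order.lt_succ_iff.1 hβ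
    rcases lt_or_eq_of_le hβle with hlt | heq
    · exact club_small β hlt hcof
    · have heμ : e β = T := by rw [hedef, if_pos heq]
      rw [heμ, heq]
      exact club_top (heq ▸ hcof)
  · intro β β' hβ hβ' hcof hcof' hne hex
    obtain ⟨δ, hδ0, hs, hs'⟩ := hex
    have hβle : β ≤ μ := by
      rw [Ordinal.add_one_eq_succ] at hβ
      exact Order.lt_succ_iff.1 hβ
    have hβ'le : β' ≤ μ := by
      rw [Ordinal.add_one_eq_succ] at hβ'
      exact Order.lt_succ_iff.1 hβ'
    rcases lt_or_eq_of_le hβle with h1 | h1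
    · rcases lt_or_eq_of_le hβ'le with h2 | h2
      · exact pair_small β β' h1 h2 hcof hcof' hne δ hδ0 hs hs'
      · exact pair_mixed β δ h1 hcof hδ0 hs (h2 ▸ hs')
    · rcases lt_or_eq_of_le hβ'le with h2 | h2
      · exact pair_mixed β' δ h2 hcof' hδ0 hs' (h1 ▸ hs)
      · exact hne (h1.trans h2.symm)


lemma main_goodness : ∀ ξ : Ordinal, ξ < (Cardinal.aleph 2).ord → ∃ e, Good ξ e := by
  intro ξ
  induction ξ using Ordinal.induction with
  | h ξ IHind =>
    intro hξ
    rcases Ordinal.zero_or_succ_or_isSuccLimit ξ with h0 | ⟨η, hη⟩ | hl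
    · refine ⟨fun _ => (∅ : Set Ordinal), ?_⟩
      rw [h0]
      exact good_zero
    · have hηξ : η < ξ := by rw [← hη]; exact Order.lt_succ η
      have hημ : η < (Cardinal.aleph 2).ord := lt_trans hηξ hξ
      rcases Ordinal.zero_or_succ_or_isSuccLimit η with hη0 | ⟨ζ, hζ⟩ | hηl
      · refine ⟨fun _ => (∅ : Set Ordinal), Good.mono good_zero ?_⟩
        intro β hβ hcof
        exfalso
        rw [← hη, hη0, Order.lt_succ_iff, nonpos_iff_eq_zero] at hβ
        rw [hβ, Ordinal.cof_zero] at hcof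
        exact absurd hcof.symm (Cardinal.aleph_pos 1).ne'
      · obtain ⟨e, he⟩ := IHind η hηξ hημ
        refine ⟨e, Good.mono he ?_⟩
        intro β hβ hcof
        rw [← hη, Order.lt_succ_iff] at hβ
        rcases lt_or_eq_of_le hβ with h | h
        · exact h
        · exfalso
          rw [h, ← hζ, Ordinal.cof_succ] at hcof
          exact absurd hcof (Cardinal.one_lt_aleph0.trans_le (Cardinal.aleph0_le_aleph 1)).ne
      · obtain ⟨e, he⟩ := glue hηl hημ
          (fun ζ' hζ' => IHind ζ' (lt_trans hζ' hηξ) (lt_trans hζ' hημ))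
        refine ⟨e, ?_⟩
        rw [← hη, ← Ordinal.add_one_eq_succ]
        exact he
    · obtain ⟨e, he⟩ := glue hl hξ (fun ζ hζ => IHind ζ hζ (lt_trans hζ hξ))
      refine ⟨e, Good.mono he ?_⟩
      intro β hβ _
      exact hβ.trans (by rw [Ordinal.add_one_eq_succ]; exact Order.lt_succ ξ)

end DLC

/-- For every `ξ < ω₂` there is a sequence `⟨e_β : β < ξ, cof β = ω₁⟩` of clubs of
    order type `ω₁` with pairwise no common limit points. -/
theorem disjoint_limit_clubs :
    ∀ ξ < (Cardinal.aleph 2).ord, ∃ e : Ordinal → Set Ordinal,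
      (∀ β, β < ξ → Ordinal.cof β = Cardinal.aleph 1 →
        (e β ⊆ Set.Iio β ∧
          (∀ x < β, ∃ y ∈ e β, x ≤ y) ∧
          (∀ δ < β, 0 < δ → sSup (e β ∩ Set.Iio δ) = δ → δ ∈ e β) ∧
          Ordinal.type ((· < ·) : ↥(e β) → ↥(e β) → Prop)
            = (Cardinal.aleph 1).ord)) ∧
      (∀ β β', β < ξ → β' < ξ → Ordinal.cof β = Cardinal.aleph 1 →
        Ordinal.cof β' = Cardinal.aleph 1 → β ≠ β' →
        ¬ ∃ δ : Ordinal, 0 < δ ∧ sSup (e β ∩ Set.Iio δ) = δ ∧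
          sSup (e β' ∩ Set.Iio δ) = δ) := by
  intro ξ hξ
  obtain ⟨e, h1, h2⟩ := main_goodness ξ hξ
  exact ⟨e, fun β hβ hcof => h1 β hβ hcof, h2⟩
end

section
/- Suppose ⟨d_α : α < ω₂, cof(α) = ω₁⟩ is a sequence such that each d_α is a club subset of α of order type ω₁, and for all α, α′ of cofinality ω₁ below ω₂ and every ordinal ξ that is a common limit point of d_α and d_{α′}, one has d_α ∩ ξ = d_{α′} ∩ ξ. Then □_{ω₁} holds: there exists a sequence ⟨C_γ : γ < ω₂, γ limit⟩ such that each C_γ is a club subset of γ of order type at most ω₁, and whenever γ is a limit point of C_δ, C_γ = C_δ ∩ γ. -/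
open Ordinal Cardinal Set

universe u v

private lemma type_subset_le {s t : Set Ordinal} (h : s ⊆ t) :
    Ordinal.type ((· < ·) : ↥s → ↥s → Prop) ≤ Ordinal.type ((· < ·) : ↥t → ↥t → Prop) :=
  Ordinal.type_le_iff'.2 ⟨⟨⟨Set.inclusion h, Set.inclusion_injective h⟩, Iff.rfl⟩⟩

private lemma nonempty_of_sSup_pos' {S : Set Ordinal} {γ : Ordinal} (h0 : 0 < γ)
    (h : sSup S = γ) : S.Nonempty := by
  rcases S.eq_empty_or_nonempty with rfl | hS
  · rw [csSup_empty] at h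
    exact absurd h.symm (by simpa using h0.ne')
  · exact hS

private def Qset (γ : Ordinal) (S : Set Ordinal) : Prop :=
  S ⊆ Set.Iio γ ∧ (∀ x < γ, ∃ y ∈ S, x ≤ y) ∧
    (∀ ξ, 0 < ξ → sSup (S ∩ Set.Iio ξ) = ξ → ξ = γ) ∧
    Ordinal.type ((· < ·) : ↥S → ↥S → Prop) ≤ (Cardinal.aleph 1).ord

private lemma exists_good_omega_set {δ : Ordinal} (hlim : Order.IsSuccLimit δ) (hcof : δ.cof = ℵ₀) :
    ∃ S : Set Ordinal, Qset δ S := by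
  classical
  obtain ⟨f, hf⟩ := Ordinal.exists_fundamental_sequence δ
  have hω : δ.cof.ord = ω := by rw [hcof, Cardinal.ord_aleph0]
  have hnat : ∀ n : ℕ, (n : Ordinal) < δ.cof.ord := fun n => by
    rw [hω]; exact Ordinal.natCast_lt_omega0 n
  set g : ℕ → Ordinal := fun n => f n (hnat n) with hg
  have hmono : StrictMono g := fun m n hmn => hf.strict_mono _ _ (by exact_mod_cast hmn)
  have hlt : ∀ n, g n < δ := fun n => by
    conv_rhs => rw [← hf.blsub_eq]
    exact Ordinal.lt_blsub f _ _
  have hcofinal : ∀ x < δ, ∃ n, x ≤ g n := by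
    intro x hx
    rw [← hf.blsub_eq] at hx
    obtain ⟨i, hi, hxi⟩ := Ordinal.lt_blsub_iff.1 hx
    have hi' : i < ω := hω ▸ hi
    obtain ⟨n, rfl⟩ := Ordinal.lt_omega0.1 hi'
    exact ⟨n, hxi⟩
  refine ⟨Set.range g, ?_, ?_, ?_, ?_⟩
  · rintro x ⟨n, rfl⟩; exact hlt n
  · intro x hx
    obtain ⟨n, hn⟩ := hcofinal x hx
    exact ⟨g n, Set.mem_range_self n, hn⟩
  · intro ξ hξ0 hs
    by_contra hne
    have hbd : ∀ x ∈ Set.range g ∩ Set.Iio ξ, x ≤ δ := by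
      rintro x ⟨⟨n, rfl⟩, _⟩; exact (hlt n).le
    have hξδ : ξ ≤ δ := hs ▸ csSup_le' hbd
    have hξδ' : ξ < δ := lt_of_le_of_ne hξδ hne
    have hex : ∃ n, ξ ≤ g n := hcofinal ξ hξδ'
    have hfind : ξ ≤ g (Nat.find hex) := Nat.find_spec hex
    have hlt_n : ∀ m, g m < ξ → m < Nat.find hex := by
      intro m hm
      by_contra hmn
      exact absurd (hfind.trans (hmono.monotone (le_of_not_gt hmn))) (not_le.2 hm)
    obtain ⟨x0, hx0⟩ := nonempty_of_sSup_pos' hξ0 hs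
    obtain ⟨⟨m0, rfl⟩, hm0⟩ := hx0
    have hn0 : 0 < Nat.find hex := Nat.pos_of_ne_zero fun h => by
      have := hlt_n m0 hm0; omega
    obtain ⟨k, hk⟩ : ∃ k, Nat.find hex = k + 1 := ⟨Nat.find hex - 1, by omega⟩
    have hgk : g k < ξ := not_le.1 (Nat.find_min hex (by omega))
    have hub : sSup (Set.range g ∩ Set.Iio ξ) ≤ g k := by
      apply csSup_le'
      rintro x ⟨⟨m, rfl⟩, hm⟩
      exact hmono.monotone (by have := hlt_n m hm; omega)
    rw [hs] at hub
    exact absurd (hub.trans_lt hgk) (lt_irrefl ξ)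
  · have hcard : #(Set.range g) ≤ ℵ₀ :=
      Cardinal.mk_le_aleph0_iff.2 (Set.countable_range g).to_subtype
    refine le_of_lt (Cardinal.lt_ord.2 ?_)
    rw [Ordinal.card_type]
    exact hcard.trans_lt Cardinal.aleph0_lt_aleph_one

private def Pd (d : Ordinal → Set Ordinal) (γ : Ordinal) : Prop :=
  0 < γ ∧ ∃ α, γ ≤ α ∧ α < (Cardinal.aleph 2).ord ∧ Ordinal.cof α = Cardinal.aleph 1 ∧
    sSup (d α ∩ Set.Iio γ) = γ

open Classical in
private noncomputable def Cd (d : Ordinal → Set Ordinal) (γ : Ordinal) : Set Ordinal :=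
  if h : Pd d γ then d h.2.choose ∩ Set.Iio γ
  else if h2 : ∃ S, Qset γ S then h2.choose else ∅

private lemma Cd_of_P {d : Ordinal → Set Ordinal} {γ : Ordinal} (h : Pd d γ) :
    ∃ α, γ ≤ α ∧ α < (Cardinal.aleph 2).ord ∧ Ordinal.cof α = Cardinal.aleph 1 ∧
      sSup (d α ∩ Set.Iio γ) = γ ∧ Cd d γ = d α ∩ Set.Iio γ := by
  obtain ⟨h1, h2, h3, h4⟩ := h.2.choose_spec
  exact ⟨h.2.choose, h1, h2, h3, h4, dif_pos h⟩

private lemma Cd_of_notP {d : Ordinal → Set Ordinal} {γ : Ordinal} (hγ : ¬ Pd d γ)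
    (hlim : Order.IsSuccLimit γ) (hcof : Ordinal.cof γ = ℵ₀) : Qset γ (Cd d γ) := by
  have hex : ∃ S, Qset γ S := exists_good_omega_set hlim hcof
  rw [Cd, dif_neg hγ, dif_pos hex]
  exact hex.choose_spec

private lemma lift_sSup_eq {S : Set Ordinal.{u}} (hbd : BddAbove S) :
    Ordinal.lift.{v} (sSup S) = sSup (Ordinal.lift.{v} '' S) := by
  rcases S.eq_empty_or_nonempty with rfl | hne
  · simp [csSup_empty]
  · obtain ⟨b, hb⟩ := hbd
    have hbd' : BddAbove (Ordinal.lift.{v} '' S) :=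
      ⟨Ordinal.lift.{v} b, by rintro x ⟨y, hy, rfl⟩; exact Ordinal.lift_le.2 (hb hy)⟩
    apply le_antisymm
    · by_contra h
      push_neg at h
      obtain ⟨c, hc⟩ := Ordinal.mem_range_lift_of_le h.le
      rw [← hc, Ordinal.lift_lt] at h
      obtain ⟨y, hy, hcy⟩ := exists_lt_of_lt_csSup hne h
      have hle : Ordinal.lift.{v} y ≤ sSup (Ordinal.lift.{v} '' S) :=
        le_csSup hbd' ⟨y, hy, rfl⟩
      rw [← hc, Ordinal.lift_le] at hle
      exact absurd (hcy.trans_le hle) (lt_irrefl c)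
    · apply csSup_le (hne.image _)
      rintro x ⟨y, hy, rfl⟩
      exact Ordinal.lift_le.2 (le_csSup ⟨b, hb⟩ hy)

private lemma lift_ord_aleph_eq (o : Ordinal.{0}) :
    Ordinal.lift.{v,u} (Cardinal.aleph (Ordinal.lift.{u} o)).ord
      = Ordinal.lift.{u,v} (Cardinal.aleph (Ordinal.lift.{v} o)).ord := by
  rw [Cardinal.lift_ord, Cardinal.lift_ord, Cardinal.lift_aleph, Cardinal.lift_aleph]
  simp [Ordinal.lift_lift]

private lemma lift_ord_aleph_two :
    Ordinal.lift.{v,u} (Cardinal.aleph 2).ord = Ordinal.lift.{u,v} (Cardinal.aleph 2).ord := by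
  have := lift_ord_aleph_eq.{u,v} 2
  simpa using this

private lemma lift_ord_aleph_one :
    Ordinal.lift.{v,u} (Cardinal.aleph 1).ord = Ordinal.lift.{u,v} (Cardinal.aleph 1).ord := by
  have := lift_ord_aleph_eq.{u,v} 1
  simpa using this

private lemma exists_down {a : Ordinal.{v}} (h : a < (Cardinal.aleph 2).ord) :
    ∃ b : Ordinal.{u}, Ordinal.lift.{v,u} b = Ordinal.lift.{u,v} a :=
  Ordinal.mem_range_lift_of_le (a := ((Cardinal.aleph 2).ord : Ordinal.{u}))
    (le_of_lt (by rw [lift_ord_aleph_two]; exact Ordinal.lift_lt.2 h))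

private noncomputable def down (a : Ordinal.{v}) : Ordinal.{u} :=
  if h : a < (Cardinal.aleph 2).ord then (exists_down h).choose else 0

private lemma down_spec {a : Ordinal.{v}} (h : a < (Cardinal.aleph 2).ord) :
    Ordinal.lift.{v,u} (down.{u,v} a) = Ordinal.lift.{u,v} a := by
  rw [down, dif_pos h]
  exact (exists_down h).choose_spec

private theorem square_aux (d : Ordinal.{u} → Set Ordinal.{u})
    (hclub : ∀ α, α < (Cardinal.aleph 2).ord → Ordinal.cof α = Cardinal.aleph 1 →
      d α ⊆ Set.Iio α ∧
      (∀ x < α, ∃ y ∈ d α, x ≤ y) ∧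
      (∀ δ < α, 0 < δ → sSup (d α ∩ Set.Iio δ) = δ → δ ∈ d α) ∧
      Ordinal.type ((· < ·) : ↥(d α) → ↥(d α) → Prop) = (Cardinal.aleph 1).ord)
    (hcoh : ∀ α α', α < (Cardinal.aleph 2).ord → α' < (Cardinal.aleph 2).ord →
      Ordinal.cof α = Cardinal.aleph 1 → Ordinal.cof α' = Cardinal.aleph 1 →
      ∀ ξ : Ordinal, 0 < ξ → sSup (d α ∩ Set.Iio ξ) = ξ → sSup (d α' ∩ Set.Iio ξ) = ξ →
        d α ∩ Set.Iio ξ = d α' ∩ Set.Iio ξ) :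
    ∃ C : Ordinal.{u} → Set Ordinal.{u},
      (∀ γ, γ < (Cardinal.aleph 2).ord → Order.IsSuccLimit γ →
        C γ ⊆ Set.Iio γ ∧
        (∀ x < γ, ∃ y ∈ C γ, x ≤ y) ∧
        (∀ δ < γ, 0 < δ → sSup (C γ ∩ Set.Iio δ) = δ → δ ∈ C γ) ∧
        Ordinal.type ((· < ·) : ↥(C γ) → ↥(C γ) → Prop) ≤ (Cardinal.aleph 1).ord) ∧
      (∀ δ, δ < (Cardinal.aleph 2).ord → Order.IsSuccLimit δ →
        ∀ γ : Ordinal, 0 < γ → sSup (C δ ∩ Set.Iio γ) = γ →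
          C γ = C δ ∩ Set.Iio γ) := by
  classical
  -- points of cofinality ω₁ satisfy P (witnessed by themselves)
  have hPself : ∀ γ, γ < (Cardinal.aleph 2).ord → Order.IsSuccLimit γ →
      Ordinal.cof γ = Cardinal.aleph 1 → Pd d γ := by
    intro γ hγ hlim hcof
    obtain ⟨hsub, hcf, _, _⟩ := hclub γ hγ hcof
    refine ⟨hlim.pos, γ, le_rfl, hγ, hcof, ?_⟩
    rw [Set.inter_eq_self_of_subset_left hsub]
    apply le_antisymm (csSup_le' fun x hx => (hsub hx).le)
    by_contra hlt
    push_neg at hlt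
    have hsucc : sSup (d γ) + 1 < γ := by
      rw [Ordinal.add_one_eq_succ]; exact hlim.succ_lt hlt
    obtain ⟨y, hy, hxy⟩ := hcf _ hsucc
    have hy' : y ≤ sSup (d γ) := le_csSup ⟨γ, fun z hz => (hsub hz).le⟩ hy
    have := hxy.trans hy'
    rw [Ordinal.add_one_eq_succ, Order.succ_le_iff] at this
    exact lt_irrefl _ this
  -- at limit points below ω₂ where P fails, the cofinality is ℵ₀
  have hcof0 : ∀ γ, γ < (Cardinal.aleph 2).ord → Order.IsSuccLimit γ → ¬ Pd d γ →
      Ordinal.cof γ = ℵ₀ := by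
    intro γ hγ hlim hnp
    have h1 : Ordinal.cof γ ≠ Cardinal.aleph 1 := fun h => hnp (hPself γ hγ hlim h)
    have h2 : Ordinal.cof γ ≤ Cardinal.aleph 1 := by
      have hcd : γ.card < Cardinal.aleph 2 := Cardinal.lt_ord.1 hγ
      have he : Cardinal.aleph 2 = Order.succ (Cardinal.aleph 1) := by
        rw [show (2 : Ordinal) = Order.succ 1 by rw [← Ordinal.add_one_eq_succ]; norm_num,
          Cardinal.aleph_succ]
      exact Order.lt_succ_iff.1 (he ▸ ((Ordinal.cof_le_card γ).trans_lt hcd))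
    have h3 : Ordinal.cof γ < Cardinal.aleph 1 := lt_of_le_of_ne h2 h1
    rw [← Cardinal.succ_aleph0] at h3
    exact le_antisymm (Order.lt_succ_iff.1 h3) (Ordinal.aleph0_le_cof.2 hlim)
  -- key: the value of Cd at a point satisfying P, for an arbitrary valid witness
  have hkey : ∀ γ α, Pd d γ → γ ≤ α → α < (Cardinal.aleph 2).ord →
      Ordinal.cof α = Cardinal.aleph 1 → sSup (d α ∩ Set.Iio γ) = γ →
      Cd d γ = d α ∩ Set.Iio γ := by
    intro γ α h hγα hα hcofα hsupα
    obtain ⟨α', _, hα', hcof', hsup', hCeq⟩ := Cd_of_P h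
    rw [hCeq]
    exact hcoh α' α hα' hα hcof' hcofα γ h.1 hsup' hsupα
  refine ⟨Cd d, ?_, ?_⟩
  · -- club properties
    intro γ hγ hlim
    by_cases hp : Pd d γ
    · obtain ⟨α, hγα, hα, hcofα, hsup, hCeq⟩ := Cd_of_P hp
      obtain ⟨hsub, _, hclosed, htype⟩ := hclub α hα hcofα
      rw [hCeq]
      refine ⟨Set.inter_subset_right, ?_, ?_, ?_⟩
      · intro x hx
        rw [← hsup] at hx
        obtain ⟨y, hy, hxy⟩ := exists_lt_of_lt_csSup (nonempty_of_sSup_pos' hp.1 hsup) hx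
        exact ⟨y, hy, hxy.le⟩
      · intro δ hδγ hδ0 hsupδ
        have hre : d α ∩ Set.Iio γ ∩ Set.Iio δ = d α ∩ Set.Iio δ := by
          rw [Set.inter_assoc, Set.Iio_inter_Iio, min_eq_right hδγ.le]
        rw [hre] at hsupδ
        exact ⟨hclosed δ (hδγ.trans_le hγα) hδ0 hsupδ, hδγ⟩
      · exact (type_subset_le Set.inter_subset_left).trans htype.le
    · obtain ⟨hsub, hcf, hcl, htype⟩ := Cd_of_notP hp hlim (hcof0 γ hγ hlim hp)
      refine ⟨hsub, hcf, ?_, htype⟩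
      intro δ hδγ hδ0 hsupδ
      exact absurd (hcl δ hδ0 hsupδ) hδγ.ne
  · -- coherence
    intro δ hδ hlim γ hγ0 hsup
    have hCsub : Cd d δ ⊆ Set.Iio δ := by
      by_cases hp : Pd d δ
      · obtain ⟨α, _, _, _, _, hCeq⟩ := Cd_of_P hp
        rw [hCeq]; exact Set.inter_subset_right
      · exact (Cd_of_notP hp hlim (hcof0 δ hδ hlim hp)).1
    have hγδ : γ ≤ δ := by
      rw [← hsup]
      exact csSup_le' fun x hx => (hCsub hx.1).le
    by_cases hp : Pd d δ
    · obtain ⟨α, hδα, hα, hcofα, _, hCeq⟩ := Cd_of_P hp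
      have hre : Cd d δ ∩ Set.Iio γ = d α ∩ Set.Iio γ := by
        rw [hCeq, Set.inter_assoc, Set.Iio_inter_Iio, min_eq_right hγδ]
      rw [hre] at hsup ⊢
      exact hkey γ α ⟨hγ0, α, hγδ.trans hδα, hα, hcofα, hsup⟩ (hγδ.trans hδα) hα hcofα hsup
    · obtain ⟨hsub, _, hcl, _⟩ := Cd_of_notP hp hlim (hcof0 δ hδ hlim hp)
      have hγδ' : γ = δ := hcl γ hγ0 hsup
      subst hγδ'
      rw [Set.inter_eq_self_of_subset_left hCsub]

private theorem square_transfer (d : Ordinal.{u} → Set Ordinal.{u})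
    (hclub : ∀ α, α < (Cardinal.aleph 2).ord → Ordinal.cof α = Cardinal.aleph 1 →
      d α ⊆ Set.Iio α ∧
      (∀ x < α, ∃ y ∈ d α, x ≤ y) ∧
      (∀ δ < α, 0 < δ → sSup (d α ∩ Set.Iio δ) = δ → δ ∈ d α) ∧
      Ordinal.type ((· < ·) : ↥(d α) → ↥(d α) → Prop) = (Cardinal.aleph 1).ord)
    (hcoh : ∀ α α', α < (Cardinal.aleph 2).ord → α' < (Cardinal.aleph 2).ord →
      Ordinal.cof α = Cardinal.aleph 1 → Ordinal.cof α' = Cardinal.aleph 1 →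
      ∀ ξ : Ordinal, 0 < ξ → sSup (d α ∩ Set.Iio ξ) = ξ → sSup (d α' ∩ Set.Iio ξ) = ξ →
        d α ∩ Set.Iio ξ = d α' ∩ Set.Iio ξ) :
    ∃ C : Ordinal.{v} → Set Ordinal.{v},
      (∀ γ, γ < (Cardinal.aleph 2).ord → Order.IsSuccLimit γ →
        C γ ⊆ Set.Iio γ ∧
        (∀ x < γ, ∃ y ∈ C γ, x ≤ y) ∧
        (∀ δ < γ, 0 < δ → sSup (C γ ∩ Set.Iio δ) = δ → δ ∈ C γ) ∧
        Ordinal.type ((· < ·) : ↥(C γ) → ↥(C γ) → Prop) ≤ (Cardinal.aleph 1).ord) ∧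
      (∀ δ, δ < (Cardinal.aleph 2).ord → Order.IsSuccLimit δ →
        ∀ γ : Ordinal, 0 < γ → sSup (C δ ∩ Set.Iio γ) = γ →
          C γ = C δ ∩ Set.Iio γ) := by
  classical
  -- transfer `d` to universe `v`
  set d' : Ordinal.{v} → Set Ordinal.{v} := fun α =>
    {x | ∃ y ∈ d (down.{u,v} α), Ordinal.lift.{v,u} y = Ordinal.lift.{u,v} x} with hd'
  -- basic transfer facts
  have hdownlt : ∀ {a : Ordinal.{v}}, a < (Cardinal.aleph 2).ord →
      down.{u,v} a < (Cardinal.aleph 2).ord := by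
    intro a ha
    rw [← Ordinal.lift_lt.{v}, down_spec ha, lift_ord_aleph_two]
    exact Ordinal.lift_lt.2 ha
  have hdownmono : ∀ {a b : Ordinal.{v}}, a < (Cardinal.aleph 2).ord →
      b < (Cardinal.aleph 2).ord → a < b → down.{u,v} a < down.{u,v} b := by
    intro a b ha hb hab
    rw [← Ordinal.lift_lt.{v}, down_spec ha, down_spec hb]
    exact Ordinal.lift_lt.2 hab
  have hdownpos : ∀ {a : Ordinal.{v}}, a < (Cardinal.aleph 2).ord → 0 < a →
      0 < down.{u,v} a := by
    intro a ha h0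
    rw [pos_iff_ne_zero]
    intro h
    have hs := down_spec ha
    rw [h, Ordinal.lift_zero] at hs
    exact h0.ne' (Ordinal.lift_inj.1 (hs.symm.trans Ordinal.lift_zero.symm))
  -- supremum transfer
  have hsup_tr : ∀ {α ξ : Ordinal.{v}}, α < (Cardinal.aleph 2).ord → ξ ≤ α →
      (sSup (d' α ∩ Set.Iio ξ) = ξ ↔
        sSup (d (down.{u,v} α) ∩ Set.Iio (down.{u,v} ξ)) = down.{u,v} ξ) := by
    intro α ξ hα hξα
    have hξ : ξ < (Cardinal.aleph 2).ord := lt_of_le_of_lt hξα hα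
    have himg : Ordinal.lift.{u,v} '' (d' α ∩ Set.Iio ξ)
        = Ordinal.lift.{v,u} '' (d (down.{u,v} α) ∩ Set.Iio (down.{u,v} ξ)) := by
      ext z
      constructor
      · rintro ⟨x, ⟨⟨y, hy, hyx⟩, hxξ⟩, rfl⟩
        refine ⟨y, ⟨hy, ?_⟩, hyx⟩
        show y < down.{u,v} ξ
        rw [← Ordinal.lift_lt.{v}, down_spec hξ, hyx]
        exact Ordinal.lift_lt.2 hxξ
      · rintro ⟨y, ⟨hy, hyξ⟩, rfl⟩
        have hyΘ : Ordinal.lift.{v,u} y < Ordinal.lift.{u,v} ξ := by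
          rw [← down_spec hξ]; exact Ordinal.lift_lt.2 hyξ
        have hyΘ' : Ordinal.lift.{v,u} y ≤ Ordinal.lift.{u,v} ξ := hyΘ.le
        obtain ⟨x, hx⟩ := Ordinal.mem_range_lift_of_le (by
          rw [← Ordinal.lift_le.{u}] at hξα
          exact hyΘ'.trans hξα : Ordinal.lift.{v,u} y ≤ Ordinal.lift.{u,v} α)
        refine ⟨x, ⟨⟨y, hy, hx.symm⟩, ?_⟩, hx ▸ rfl⟩
        show x < ξ
        rw [← Ordinal.lift_lt.{u}, hx]
        exact hyΘ
    have hbd1 : BddAbove (d' α ∩ Set.Iio ξ) := ⟨ξ, fun x hx => hx.2.le⟩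
    have hbd2 : BddAbove (d (down.{u,v} α) ∩ Set.Iio (down.{u,v} ξ)) :=
      ⟨down.{u,v} ξ, fun x hx => hx.2.le⟩
    constructor
    · intro h
      rw [← Ordinal.lift_inj.{v}, lift_sSup_eq hbd2, ← himg, ← lift_sSup_eq hbd1, h,
        down_spec hξ]
    · intro h
      rw [← Ordinal.lift_inj.{u}, lift_sSup_eq hbd1, himg, ← lift_sSup_eq hbd2, h,
        down_spec hξ]
  -- cofinality transfer
  have hcof_tr : ∀ {a : Ordinal.{v}}, a < (Cardinal.aleph 2).ord →
      Ordinal.cof a = Cardinal.aleph 1 → Ordinal.cof (down.{u,v} a) = Cardinal.aleph 1 := by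
    intro a ha hc
    have h1 : Cardinal.lift.{v} (down.{u,v} a).cof = Cardinal.lift.{u} a.cof := by
      rw [Ordinal.lift_cof, Ordinal.lift_cof, down_spec ha]
    rw [hc] at h1
    have h2 : Cardinal.lift.{u,v} (Cardinal.aleph 1) = Cardinal.lift.{v,u} (Cardinal.aleph 1) := by
      rw [Cardinal.lift_aleph, Cardinal.lift_aleph]; simp
    rw [h2] at h1
    exact Cardinal.lift_inj.1 h1
  -- subset property of d'
  have hsub' : ∀ {α : Ordinal.{v}}, α < (Cardinal.aleph 2).ord →
      Ordinal.cof α = Cardinal.aleph 1 → d' α ⊆ Set.Iio α := by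
    intro α hα hc x hx
    obtain ⟨y, hy, hyx⟩ := hx
    obtain ⟨hsub, -, -, -⟩ := hclub (down.{u,v} α) (hdownlt hα) (hcof_tr hα hc)
    show x < α
    rw [← Ordinal.lift_lt.{u}, ← hyx, ← down_spec hα]
    exact Ordinal.lift_lt.2 (hsub hy)
  -- the club properties for d'
  have hclub' : ∀ α, α < (Cardinal.aleph 2).ord → Ordinal.cof α = Cardinal.aleph 1 →
      d' α ⊆ Set.Iio α ∧
      (∀ x < α, ∃ y ∈ d' α, x ≤ y) ∧
      (∀ δ < α, 0 < δ → sSup (d' α ∩ Set.Iio δ) = δ → δ ∈ d' α) ∧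
      Ordinal.type ((· < ·) : ↥(d' α) → ↥(d' α) → Prop) = (Cardinal.aleph 1).ord := by
    intro α hα hc
    obtain ⟨hsub, hcf, hcl, hty⟩ := hclub (down.{u,v} α) (hdownlt hα) (hcof_tr hα hc)
    refine ⟨hsub' hα hc, ?_, ?_, ?_⟩
    · intro x hx
      have hxΘ : x < (Cardinal.aleph 2).ord := hx.trans hα
      obtain ⟨y, hy, hxy⟩ := hcf (down.{u,v} x) (hdownmono hxΘ hα hx)
      have hyα : Ordinal.lift.{v,u} y ≤ Ordinal.lift.{u,v} α := by
        rw [← down_spec hα]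
        exact (Ordinal.lift_lt.2 (hsub hy)).le
      obtain ⟨x', hx'⟩ := Ordinal.mem_range_lift_of_le hyα
      refine ⟨x', ⟨y, hy, hx'.symm⟩, ?_⟩
      rw [← Ordinal.lift_le.{u}, hx', ← down_spec hxΘ]
      exact Ordinal.lift_le.2 hxy
    · intro δ hδα hδ0 hsupδ
      have hδΘ : δ < (Cardinal.aleph 2).ord := hδα.trans hα
      rw [hsup_tr hα hδα.le] at hsupδ
      exact ⟨down.{u,v} δ,
        hcl (down.{u,v} δ) (hdownmono hδΘ hα hδα) (hdownpos hδΘ hδ0) hsupδ,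
        down_spec hδΘ⟩
    · have hmem : ∀ x : ↥(d' α), ∃ y, y ∈ d (down.{u,v} α) ∧
          Ordinal.lift.{v,u} y = Ordinal.lift.{u,v} (x : Ordinal) := by
        rintro ⟨x, y, hy, hyx⟩
        exact ⟨y, hy, hyx⟩
      let e : ↥(d' α) → ↥(d (down.{u,v} α)) := fun x => ⟨(hmem x).choose, (hmem x).choose_spec.1⟩
      have he : ∀ x, Ordinal.lift.{v,u} ((e x : Ordinal)) = Ordinal.lift.{u,v} (x : Ordinal) :=
        fun x => (hmem x).choose_spec.2
      have hsm : StrictMono e := by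
        intro x y hxy
        have h1 : Ordinal.lift.{v,u} (e x : Ordinal) < Ordinal.lift.{v,u} (e y : Ordinal) := by
          rw [he, he]
          exact Ordinal.lift_lt.2 (Subtype.coe_lt_coe.2 hxy)
        exact Subtype.coe_lt_coe.1 (Ordinal.lift_lt.1 h1)
      have hsurj : Function.Surjective e := by
        rintro ⟨y, hy⟩
        have hyα : Ordinal.lift.{v,u} y ≤ Ordinal.lift.{u,v} α := by
          rw [← down_spec hα]
          exact (Ordinal.lift_lt.2 (hsub hy)).le
        obtain ⟨x, hx⟩ := Ordinal.mem_range_lift_of_le hyα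
        have hxmem : x ∈ d' α := ⟨y, hy, hx.symm⟩
        refine ⟨⟨x, hxmem⟩, Subtype.ext ?_⟩
        have h3 := he ⟨x, hxmem⟩
        rw [hx] at h3
        exact Ordinal.lift_inj.1 h3
      let oi := StrictMono.orderIsoOfSurjective e hsm hsurj
      have hiso : Nonempty (((· < ·) : ↥(d' α) → ↥(d' α) → Prop) ≃r
          ((· < ·) : ↥(d (down.{u,v} α)) → ↥(d (down.{u,v} α)) → Prop)) :=
        ⟨⟨oi.toEquiv, oi.lt_iff_lt⟩⟩
      have hty' : Ordinal.lift.{u+1,v+1}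
            (Ordinal.type ((· < ·) : ↥(d' α) → ↥(d' α) → Prop))
          = Ordinal.lift.{v+1,u+1} (Ordinal.type
            ((· < ·) : ↥(d (down.{u,v} α)) → ↥(d (down.{u,v} α)) → Prop)) :=
        (@Ordinal.lift_type_eq.{v+1,u+1,0} ↥(d' α) ↥(d (down.{u,v} α))
          ((· < ·) : ↥(d' α) → ↥(d' α) → Prop)
          ((· < ·) : ↥(d (down.{u,v} α)) → ↥(d (down.{u,v} α)) → Prop)
          inferInstance inferInstance).2 hiso
      rw [hty, lift_ord_aleph_one.{u+1,v+1}] at hty'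
      exact Ordinal.lift_inj.1 hty'
  -- coherence for d'
  have hcoh' : ∀ α α', α < (Cardinal.aleph 2).ord → α' < (Cardinal.aleph 2).ord →
      Ordinal.cof α = Cardinal.aleph 1 → Ordinal.cof α' = Cardinal.aleph 1 →
      ∀ ξ : Ordinal.{v}, 0 < ξ → sSup (d' α ∩ Set.Iio ξ) = ξ → sSup (d' α' ∩ Set.Iio ξ) = ξ →
        d' α ∩ Set.Iio ξ = d' α' ∩ Set.Iio ξ := by
    intro α α' hα hα' hc hc' ξ hξ0 hs1 hs2
    have hξα : ξ ≤ α := by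
      rw [← hs1]
      exact csSup_le' fun x hx => ((hsub' hα hc) hx.1).le
    have hξα' : ξ ≤ α' := by
      rw [← hs2]
      exact csSup_le' fun x hx => ((hsub' hα' hc') hx.1).le
    have hξΘ : ξ < (Cardinal.aleph 2).ord := lt_of_le_of_lt hξα hα
    have h1 := (hsup_tr hα hξα).1 hs1
    have h2 := (hsup_tr hα' hξα').1 hs2
    have heq := hcoh (down.{u,v} α) (down.{u,v} α') (hdownlt hα) (hdownlt hα')
      (hcof_tr hα hc) (hcof_tr hα' hc') (down.{u,v} ξ) (hdownpos hξΘ hξ0) h1 h2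
    ext x
    constructor
    · rintro ⟨⟨y, hy, hyx⟩, hxξ⟩
      have hyξ : y < down.{u,v} ξ := by
        rw [← Ordinal.lift_lt.{v}, down_spec hξΘ, hyx]
        exact Ordinal.lift_lt.2 hxξ
      have : y ∈ d (down.{u,v} α') ∩ Set.Iio (down.{u,v} ξ) := heq ▸ ⟨hy, hyξ⟩
      exact ⟨⟨y, this.1, hyx⟩, hxξ⟩
    · rintro ⟨⟨y, hy, hyx⟩, hxξ⟩
      have hyξ : y < down.{u,v} ξ := by
        rw [← Ordinal.lift_lt.{v}, down_spec hξΘ, hyx]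
        exact Ordinal.lift_lt.2 hxξ
      have : y ∈ d (down.{u,v} α) ∩ Set.Iio (down.{u,v} ξ) := heq.symm ▸ ⟨hy, hyξ⟩
      exact ⟨⟨y, this.1, hyx⟩, hxξ⟩
  exact square_aux.{v} d' hclub' hcoh'

/-- From a coherent sequence of clubs on the points of cofinality `ω₁` below `ω₂`,
    the square principle `□_{ω₁}` follows. -/
theorem square_of_coherent_clubs (d : Ordinal → Set Ordinal)
    (hclub : ∀ α, α < (Cardinal.aleph 2).ord → Ordinal.cof α = Cardinal.aleph 1 →
      d α ⊆ Set.Iio α ∧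
      (∀ x < α, ∃ y ∈ d α, x ≤ y) ∧
      (∀ δ < α, 0 < δ → sSup (d α ∩ Set.Iio δ) = δ → δ ∈ d α) ∧
      Ordinal.type ((· < ·) : ↥(d α) → ↥(d α) → Prop) = (Cardinal.aleph 1).ord)
    (hcoh : ∀ α α', α < (Cardinal.aleph 2).ord → α' < (Cardinal.aleph 2).ord →
      Ordinal.cof α = Cardinal.aleph 1 → Ordinal.cof α' = Cardinal.aleph 1 →
      ∀ ξ : Ordinal, 0 < ξ → sSup (d α ∩ Set.Iio ξ) = ξ → sSup (d α' ∩ Set.Iio ξ) = ξ →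
        d α ∩ Set.Iio ξ = d α' ∩ Set.Iio ξ) :
    ∃ C : Ordinal → Set Ordinal,
      (∀ γ, γ < (Cardinal.aleph 2).ord → Order.IsSuccLimit γ →
        C γ ⊆ Set.Iio γ ∧
        (∀ x < γ, ∃ y ∈ C γ, x ≤ y) ∧
        (∀ δ < γ, 0 < δ → sSup (C γ ∩ Set.Iio δ) = δ → δ ∈ C γ) ∧
        Ordinal.type ((· < ·) : ↥(C γ) → ↥(C γ) → Prop) ≤ (Cardinal.aleph 1).ord) ∧
      (∀ δ, δ < (Cardinal.aleph 2).ord → Order.IsSuccLimit δ →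
        ∀ γ : Ordinal, 0 < γ → sSup (C δ ∩ Set.Iio γ) = γ →
          C γ = C δ ∩ Set.Iio γ) :=
  square_transfer d hclub hcoh
end
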